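/- arXiv:1702.02220 — 6 statements merged into one kernel-verified Lean document; each statement's English description precedes it below -/
import Mathlib

section
/- Let U ∈ U(N) be a unitary matrix that is circulant, meaning U_{ij} = γ_{j−i} for some vector γ ∈ ℂ^N with indices taken modulo N, and self-adjoint (U* = U, equivalently conj(γ_i) = γ_{−i} for all i). Then U is balanced: for all r, s > 0 the matrices U_r·U_s* and U_r*·U_s are self-adjoint. -/
open scoped Matrix

/-- the sign `sgn(z) = z/|z|` of a complex number (with `sgn 0 = 0`). -/
noncomputable def csgn (z : ℂ) : ℂ := z / (‖z‖ : ℂ)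

/-- the color component `U_r` of a matrix `U`. -/
noncomputable def colorComp {n : Type*} (U : Matrix n n ℂ) (r : ℝ) :
    Matrix n n ℂ :=
  Matrix.of fun i j => if ‖U i j‖ = r then csgn (U i j) else 0

/-- a matrix is balanced when `U_r·U_s*` and `U_r*·U_s` are self-adjoint
for all `r, s > 0`. -/
def IsBalanced {n : Type*} [Fintype n] (U : Matrix n n ℂ) : Prop :=
  ∀ r s : ℝ, 0 < r → 0 < s →
    (colorComp U r * (colorComp U s)ᴴ).IsHermitian ∧
    ((colorComp U r)ᴴ * colorComp U s).IsHermitian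

lemma csgn_conj (z : ℂ) : (starRingEnd ℂ) (csgn z) = csgn ((starRingEnd ℂ) z) := by
  simp [csgn, map_div₀, Complex.norm_conj, Complex.conj_ofReal]

lemma colorComp_hermitian {n : Type*} {U : Matrix n n ℂ} (hsa : U.IsHermitian) (r : ℝ) :
    (colorComp U r).IsHermitian := by
  ext i j
  have h : (starRingEnd ℂ) (U j i) = U i j := hsa.apply i j
  simp only [colorComp, Matrix.conjTranspose_apply, Matrix.of_apply]
  have habs : ‖U j i‖ = ‖U i j‖ := by
    rw [← h, Complex.norm_conj]
  rw [habs]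
  split_ifs with hcase
  · rw [← h, ← csgn_conj]; rfl
  · exact star_zero _

lemma colorComp_circulant {N : ℕ} {γ : Fin N → ℂ} {U : Matrix (Fin N) (Fin N) ℂ}
    (hcirc : ∀ i j, U i j = γ (j - i)) (r : ℝ) :
    colorComp U r =
      Matrix.circulant (fun x => if ‖γ (-x)‖ = r then csgn (γ (-x)) else 0) := by
  ext i j
  have hn : -(i - j) = j - i := by
    match N, i, j with
    | (n+1), i, j => rw [neg_sub]
  simp [colorComp, Matrix.circulant, hcirc i j, hn]

/-- A circulant (`U_{ij} = γ_{j−i}`, indices mod `N`) self-adjoint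
unitary matrix is balanced. -/
theorem stmt6 (N : ℕ) (γ : Fin N → ℂ) (U : Matrix (Fin N) (Fin N) ℂ)
    (hU : U ∈ Matrix.unitaryGroup (Fin N) ℂ)
    (hcirc : ∀ i j, U i j = γ (j - i))
    (hsa : U.IsHermitian) :
    IsBalanced U := by
  intro r s hr hs
  have hr' := colorComp_hermitian hsa r
  have hs' := colorComp_hermitian hsa s
  have hcomm : colorComp U r * colorComp U s = colorComp U s * colorComp U r := by
    rw [colorComp_circulant hcirc r, colorComp_circulant hcirc s,
      Matrix.Fin.circulant_mul_comm]
  constructor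
  · rw [hs']
    unfold Matrix.IsHermitian
    rw [Matrix.conjTranspose_mul, hr', hs', hcomm]
  · rw [hr']
    unfold Matrix.IsHermitian
    rw [Matrix.conjTranspose_mul, hr', hs', ← hcomm]
end

section
/- Let ψ : [0,∞) → ℝ be differentiable, let U ∈ U(N) be unitary, and let A ∈ M_N(ℂ) be anti-hermitian. Then the derivative at t = 0 of f(t) = Σ_{i,j} ψ(|(U·exp(tA))_{ij}|²) equals f'(0) = 2·Σ_{r>0} r·ψ'(r²)·Re[Tr(U_r*·U·A)], where the sum runs over the (finitely many) values r > 0 occurring as moduli |U_{ij}| of entries of U. -/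
open scoped Matrix

section
attribute [local instance] Matrix.linftyOpNormedRing Matrix.linftyOpNormedAlgebra

theorem stmt8_aux_entry (N : ℕ) (U A : Matrix (Fin N) (Fin N) ℂ) (i j : Fin N) :
    HasDerivAt (fun t : ℝ => (U * NormedSpace.exp (t • A)) i j) ((U * A) i j) 0 := by
  have h1 : HasDerivAt (fun t : ℝ => NormedSpace.exp (t • A)) A 0 := by
    have := hasDerivAt_exp_smul_const (𝕂 := ℝ) A (0:ℝ)
    simp at this
    exact this
  have h2 : HasDerivAt (fun t : ℝ => U * NormedSpace.exp (t • A)) (U * A) 0 := h1.const_mul U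
  let e : Matrix (Fin N) (Fin N) ℂ →L[ℝ] ℂ :=
    (Matrix.entryLinearMap ℝ ℂ i j).toContinuousLinearMap
  exact e.hasFDerivAt.comp_hasDerivAt 0 h2

end

theorem stmt8_aux_psi (N : ℕ) (ψ : ℝ → ℝ) (hψ : DifferentiableOn ℝ ψ (Set.Ici 0))
    (U A : Matrix (Fin N) (Fin N) ℂ) (i j : Fin N) :
    HasDerivAt (fun t : ℝ => ψ (‖(U * NormedSpace.exp (t • A)) i j‖ ^ 2))
      (derivWithin ψ (Set.Ici 0) (‖U i j‖ ^ 2) *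
        (2 * ((starRingEnd ℂ) (U i j) * (U * A) i j).re)) 0 := by
  set m : ℝ → ℂ := fun t => (U * NormedSpace.exp (t • A)) i j with hm_def
  have hm : HasDerivAt m ((U * A) i j) 0 := stmt8_aux_entry N U A i j
  have hm0 : m 0 = U i j := by
    simp [hm_def, zero_smul, NormedSpace.exp_zero]
  have hre : HasDerivAt (fun t => (m t).re) ((U * A) i j).re 0 :=
    Complex.reCLM.hasFDerivAt.comp_hasDerivAt 0 hm
  have him : HasDerivAt (fun t => (m t).im) ((U * A) i j).im 0 :=
    Complex.imCLM.hasFDerivAt.comp_hasDerivAt 0 hm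
  have hg : HasDerivAt (fun t => ‖m t‖ ^ 2)
      (2 * ((starRingEnd ℂ) (U i j) * (U * A) i j).re) 0 := by
    have h := (hre.pow 2).add (him.pow 2)
    have heq : (fun t => ‖m t‖ ^ 2) = fun t => (m t).re ^ 2 + (m t).im ^ 2 := by
      funext t
      rw [Complex.sq_norm, Complex.normSq_apply]; ring
    rw [heq]
    refine HasDerivAt.congr_deriv h ?_
    rw [hm0]
    simp [Complex.mul_re]
    ring
  have hψ' : HasDerivWithinAt ψ (derivWithin ψ (Set.Ici 0) (‖U i j‖ ^ 2))
      (Set.Ici 0) (‖U i j‖ ^ 2) :=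
    (hψ _ (Set.mem_Ici.2 (sq_nonneg _))).hasDerivWithinAt
  have hmem : ∀ t : ℝ, ‖m t‖ ^ 2 ∈ Set.Ici (0:ℝ) := fun t => Set.mem_Ici.2 (sq_nonneg _)
  have := hψ'.scomp_hasDerivAt_of_eq 0 hg hmem (by rw [hm0])
  simp [mul_comm] at this
  refine HasDerivAt.congr_deriv this ?_
  simp [Complex.mul_re]
  ring

theorem stmt8_aux_pt (φ : ℝ → ℝ) (F : Finset ℝ) (a b : ℂ)
    (ha : a ≠ 0 → ‖a‖ ∈ F) :
    φ (‖a‖ ^ 2) * (2 * ((starRingEnd ℂ) a * b).re) =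
      ∑ r ∈ F, 2 * (r * φ (r ^ 2) *
        ((starRingEnd ℂ) (if ‖a‖ = r then csgn a else 0) * b).re) := by
  by_cases h : a = 0
  · subst h
    simp [csgn]
  · have hr0 : (0:ℝ) < ‖a‖ := norm_pos_iff.mpr h
    rw [Finset.sum_eq_single_of_mem (‖a‖) (ha h) ?_]
    · rw [if_pos rfl]
      have hcs : (starRingEnd ℂ) (csgn a) = (starRingEnd ℂ) a / (‖a‖ : ℂ) := by
        simp [csgn, map_div₀]
      rw [hcs, div_mul_eq_mul_div, Complex.div_ofReal_re]
      field_simp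
    · intro r _ hne
      rw [if_neg (fun hh => hne hh.symm)]
      simp

theorem stmt8_aux_tr (N : ℕ) (U A : Matrix (Fin N) (Fin N) ℂ) (r : ℝ) :
    (Matrix.trace ((colorComp U r)ᴴ * U * A)).re =
      ∑ i, ∑ j, ((starRingEnd ℂ)
        (if ‖U i j‖ = r then csgn (U i j) else 0) * (U * A) i j).re := by
  rw [Matrix.mul_assoc, Matrix.trace]
  simp only [Matrix.diag_apply, Matrix.mul_apply, Matrix.conjTranspose_apply, colorComp,
    Matrix.of_apply, Complex.re_sum]
  rw [Finset.sum_comm]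
  rfl

/-- For `ψ : [0,∞) → ℝ` differentiable, `U ∈ U(N)` unitary and `A`
anti-hermitian, the derivative at `t = 0` of `f(t) = ∑_{i,j} ψ(|(U·exp(tA))_{ij}|²)`
equals `2·∑_{r>0} r·ψ'(r²)·Re[Tr(U_r*·U·A)]`, the sum running over the finitely many
values `r > 0` occurring as moduli of entries of `U`. -/
theorem stmt8 (N : ℕ) (ψ : ℝ → ℝ) (hψ : DifferentiableOn ℝ ψ (Set.Ici 0))
    (U : Matrix (Fin N) (Fin N) ℂ) (hU : U ∈ Matrix.unitaryGroup (Fin N) ℂ)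
    (A : Matrix (Fin N) (Fin N) ℂ) (hA : Aᴴ = -A) :
    HasDerivAt
      (fun t : ℝ => ∑ i, ∑ j,
        ψ (‖(U * NormedSpace.exp (t • A)) i j‖ ^ 2))
      (2 * ∑ r ∈ Finset.filter (fun r => 0 < r)
          ((Finset.univ : Finset (Fin N × Fin N)).image fun p => ‖U p.1 p.2‖),
        r * derivWithin ψ (Set.Ici 0) (r ^ 2) *
          (Matrix.trace ((colorComp U r)ᴴ * U * A)).re)
      0 := by
  set φ : ℝ → ℝ := derivWithin ψ (Set.Ici 0) with hφ
  set F : Finset ℝ := Finset.filter (fun r => 0 < r)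
      ((Finset.univ : Finset (Fin N × Fin N)).image fun p => ‖U p.1 p.2‖) with hF
  have hsum : HasDerivAt
      (fun t : ℝ => ∑ i, ∑ j,
        ψ (‖(U * NormedSpace.exp (t • A)) i j‖ ^ 2))
      (∑ i, ∑ j, φ (‖U i j‖ ^ 2) *
        (2 * ((starRingEnd ℂ) (U i j) * (U * A) i j).re)) 0 :=
    HasDerivAt.fun_sum fun i _ => HasDerivAt.fun_sum fun j _ => stmt8_aux_psi N ψ hψ U A i j
  have key : (2 * ∑ r ∈ F, r * φ (r ^ 2) * (Matrix.trace ((colorComp U r)ᴴ * U * A)).re)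
      = ∑ i, ∑ j, φ (‖U i j‖ ^ 2) *
        (2 * ((starRingEnd ℂ) (U i j) * (U * A) i j).re) := by
    have step1 : (2 * ∑ r ∈ F, r * φ (r ^ 2) * (Matrix.trace ((colorComp U r)ᴴ * U * A)).re)
        = ∑ r ∈ F, ∑ i, ∑ j, 2 * (r * φ (r ^ 2) *
            ((starRingEnd ℂ) (if ‖U i j‖ = r then csgn (U i j) else 0)
              * (U * A) i j).re) := by
      rw [Finset.mul_sum]
      refine Finset.sum_congr rfl fun r _ => ?_
      rw [stmt8_aux_tr N U A r]
      simp only [Finset.mul_sum]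
    rw [step1, Finset.sum_comm]
    refine Finset.sum_congr rfl fun i _ => ?_
    rw [Finset.sum_comm]
    refine Finset.sum_congr rfl fun j _ => ?_
    refine (stmt8_aux_pt φ F (U i j) ((U * A) i j) fun h => ?_).symm
    exact Finset.mem_filter.2
      ⟨Finset.mem_image.2 ⟨(i, j), Finset.mem_univ _, rfl⟩, norm_pos_iff.mpr h⟩
  exact key ▸ hsum
end

section
/- Let U ∈ U(N) be unitary with all entries nonzero, set S_{ij} = sgn(U_{ij}), and let A ∈ M_N(ℂ) be anti-hermitian. Then the second derivative at t = 0 of f(t) = ‖U·exp(tA)‖₁ = Σ_{i,j} |(U·exp(tA))_{ij}| equals f''(0) = Re[Tr(S*·U·A²)] + Σ_{i,j} (Im[(UA)_{ij}·conj(S_{ij})])² / |U_{ij}|. -/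
open scoped Matrix ComplexConjugate

section Aux

attribute [local instance] Matrix.linftyOpNormedRing Matrix.linftyOpNormedAlgebra

lemma entry_hasDerivAt {N : ℕ} (B C A : Matrix (Fin N) (Fin N) ℂ) (i j : Fin N) (t₀ : ℝ) :
    HasDerivAt (fun t : ℝ => (B * NormedSpace.exp (t • A) * C) i j)
      ((B * NormedSpace.exp (t₀ • A) * A * C) i j) t₀ := by
  have hexp := hasDerivAt_exp_smul_const (𝕂 := ℝ) A t₀
  let L : Matrix (Fin N) (Fin N) ℂ →ₗ[ℝ] ℂ :=
    { toFun := fun M => (B * M * C) i j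
      map_add' := by intro x y; simp [Matrix.mul_add, Matrix.add_mul]
      map_smul' := by intro r x; simp [Matrix.mul_smul, Matrix.smul_mul] }
  have := (L.toContinuousLinearMap.hasFDerivAt (x := NormedSpace.exp (t₀ • A))).comp_hasDerivAt t₀ hexp
  rw [show B * NormedSpace.exp (t₀ • A) * A * C = B * (NormedSpace.exp (t₀ • A) * A) * C by simp [mul_assoc]]
  exact this

lemma abs_hasDerivAt {z : ℝ → ℂ} {z' : ℂ} {t : ℝ} (hz : HasDerivAt z z' t) (h0 : z t ≠ 0) :
    HasDerivAt (fun s => ‖z s‖) ((z' * conj (z t)).re / ‖z t‖) t := by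
  have hre : HasDerivAt (fun s => (z s).re) z'.re t :=
    (Complex.reCLM.hasFDerivAt.comp_hasDerivAt t hz)
  have him : HasDerivAt (fun s => (z s).im) z'.im t :=
    (Complex.imCLM.hasFDerivAt.comp_hasDerivAt t hz)
  have hq : HasDerivAt (fun s => (z s).re * (z s).re + (z s).im * (z s).im)
      (z'.re * (z t).re + (z t).re * z'.re + (z'.im * (z t).im + (z t).im * z'.im)) t :=
    (hre.mul hre).add (him.mul him)
  have hq0 : (z t).re * (z t).re + (z t).im * (z t).im ≠ 0 := by
    have := Complex.normSq_pos.mpr h0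
    rw [Complex.normSq_apply] at this
    exact ne_of_gt this
  have hsqrt := (Real.hasDerivAt_sqrt hq0).comp t hq
  have habs : (fun s => ‖z s‖) =
      (fun s => Real.sqrt ((z s).re * (z s).re + (z s).im * (z s).im)) := by
    funext s; rw [Complex.norm_def, Complex.normSq_apply]
  rw [habs]
  refine hsqrt.congr_deriv ?_
  have hA : ‖z t‖ = Real.sqrt ((z t).re * (z t).re + (z t).im * (z t).im) := by
    rw [Complex.norm_def, Complex.normSq_apply]
  have hApos : (0:ℝ) < ‖z t‖ := by simpa using h0
  rw [Function.comp_def] at *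
  rw [Complex.mul_re, Complex.conj_re, Complex.conj_im, ← hA]
  field_simp
  ring

lemma key_alg (z z' w' : ℂ) (hz0 : z ≠ 0) :
    ((w' * conj z + z' * conj z').re * ‖z‖ -
        (z' * conj z).re * ((z' * conj z).re / ‖z‖)) / (‖z‖) ^ 2
      = (w' * conj (z / (‖z‖ : ℝ))).re
        + ((z' * conj (z / (‖z‖ : ℝ))).im) ^ 2 / ‖z‖ := by
  set a : ℝ := ‖z‖ with ha
  have hapos : 0 < a := by simpa [ha] using hz0
  have hconj : conj (z / (a : ℂ)) = conj z / (a : ℂ) := by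
    rw [map_div₀, Complex.conj_ofReal]
  rw [hconj]
  have hre : (w' * (conj z / (a:ℂ))).re = (w' * conj z).re / a := by
    rw [mul_div_assoc']
    exact Complex.div_ofReal_re _ _
  have him : (z' * (conj z / (a:ℂ))).im = (z' * conj z).im / a := by
    rw [mul_div_assoc']
    exact Complex.div_ofReal_im _ _
  rw [hre, him, Complex.add_re]
  have h1 : (z' * conj z).re ^ 2 + (z' * conj z).im ^ 2 = (z' * conj z').re * a ^ 2 := by
    have e1 : (z' * conj z).re ^ 2 + (z' * conj z).im ^ 2 = Complex.normSq (z' * conj z) := by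
      rw [Complex.normSq_apply]; ring
    have e2 : z' * conj z' = (Complex.normSq z' : ℂ) := Complex.mul_conj _
    have e3 : a ^ 2 = Complex.normSq z := by rw [ha, Complex.sq_norm]
    rw [e1, e2, e3, Complex.normSq_mul, Complex.normSq_conj]
    simp
  have hane : a ≠ 0 := ne_of_gt hapos
  set p := (w' * conj z).re
  set n := (z' * conj z').re
  set r := (z' * conj z).re
  set s := (z' * conj z).im
  field_simp
  linear_combination (-1) * h1

end Aux

/-- For `U ∈ U(N)` with nonzero entries, `S_{ij} = sgn(U_{ij})` and `A`
anti-hermitian, the second derivative at `t = 0` of `f(t) = ‖U·exp(tA)‖₁` equals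
`Re[Tr(S*·U·A²)] + ∑_{i,j} (Im[(UA)_{ij}·conj S_{ij}])² / |U_{ij}|`. -/
theorem stmt10 (N : ℕ) (U : Matrix (Fin N) (Fin N) ℂ)
    (hU : U ∈ Matrix.unitaryGroup (Fin N) ℂ) (hne : ∀ i j, U i j ≠ 0)
    (S : Matrix (Fin N) (Fin N) ℂ) (hS : S = Matrix.of fun i j => csgn (U i j))
    (A : Matrix (Fin N) (Fin N) ℂ) (hA : Aᴴ = -A) :
    HasDerivAt
      (deriv (fun t : ℝ => ∑ i, ∑ j,
        ‖(U * NormedSpace.exp (t • A)) i j‖))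
      ((Matrix.trace (Sᴴ * U * (A * A))).re +
        ∑ i, ∑ j, (((U * A) i j * conj (S i j)).im) ^ 2 / ‖U i j‖)
      0 := by
  -- derivatives of entries
  have hz : ∀ (i j : Fin N) (t₀ : ℝ),
      HasDerivAt (fun t : ℝ => (U * NormedSpace.exp (t • A)) i j)
        ((U * NormedSpace.exp (t₀ • A) * A) i j) t₀ := by
    intro i j t₀
    have := entry_hasDerivAt U 1 A i j t₀
    simpa [Matrix.mul_one] using this
  have hw : ∀ (i j : Fin N) (t₀ : ℝ),
      HasDerivAt (fun t : ℝ => (U * NormedSpace.exp (t • A) * A) i j)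
        ((U * NormedSpace.exp (t₀ • A) * A * A) i j) t₀ :=
    fun i j t₀ => entry_hasDerivAt U A A i j t₀
  have hz0 : ∀ i j : Fin N, (U * NormedSpace.exp ((0:ℝ) • A)) i j = U i j := by
    intro i j; simp [NormedSpace.exp_zero]
  -- eventually all entries nonzero
  have hev : ∀ᶠ t in nhds (0:ℝ), ∀ i j, (U * NormedSpace.exp (t • A)) i j ≠ 0 := by
    rw [Filter.eventually_all]; intro i
    rw [Filter.eventually_all]; intro j
    have hc : ContinuousAt (fun t : ℝ => (U * NormedSpace.exp (t • A)) i j) 0 :=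
      (hz i j 0).continuousAt
    have : (fun t : ℝ => (U * NormedSpace.exp (t • A)) i j) 0 ≠ 0 := by
      simpa [hz0 i j] using hne i j
    exact hc.eventually_ne this
  -- the first derivative function near 0
  set h : ℝ → ℝ := fun t => ∑ i, ∑ j,
    ((U * NormedSpace.exp (t • A) * A) i j *
        conj ((U * NormedSpace.exp (t • A)) i j)).re /
      ‖(U * NormedSpace.exp (t • A)) i j‖ with hh
  have heq : deriv (fun t : ℝ => ∑ i, ∑ j,
      ‖(U * NormedSpace.exp (t • A)) i j‖) =ᶠ[nhds (0:ℝ)] h := by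
    refine hev.mono fun t ht => ?_
    have : HasDerivAt (fun t : ℝ => ∑ i, ∑ j,
        ‖(U * NormedSpace.exp (t • A)) i j‖) (h t) t := by
      rw [hh]
      exact HasDerivAt.fun_sum fun i _ => HasDerivAt.fun_sum fun j _ =>
        abs_hasDerivAt (hz i j t) (ht i j)
    exact this.deriv
  -- second derivative of each term at 0
  have hterm : ∀ i j : Fin N, HasDerivAt (fun t : ℝ =>
      ((U * NormedSpace.exp (t • A) * A) i j *
          conj ((U * NormedSpace.exp (t • A)) i j)).re /
        ‖(U * NormedSpace.exp (t • A)) i j‖)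
      ((((U * A * A) i j * conj (U i j) + (U * A) i j * conj ((U * A) i j)).re *
          ‖U i j‖ -
          ((U * A) i j * conj (U i j)).re *
            (((U * A) i j * conj (U i j)).re / ‖U i j‖)) /
        (‖U i j‖) ^ 2) 0 := by
    intro i j
    have hne' : (U * NormedSpace.exp ((0:ℝ) • A)) i j ≠ 0 := by
      rw [hz0 i j]; exact hne i j
    have hstar : HasDerivAt (fun t : ℝ => conj ((U * NormedSpace.exp (t • A)) i j))
        (conj ((U * NormedSpace.exp ((0:ℝ) • A) * A) i j)) 0 := by
      simpa [Complex.star_def] using (hz i j 0).star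
    have hm := (hw i j 0).mul hstar
    have hre := Complex.reCLM.hasFDerivAt.comp_hasDerivAt 0 hm
    have habs := abs_hasDerivAt (hz i j 0) hne'
    have hdiv := hre.fun_div habs (by simpa [hz0 i j] using hne i j)
    have e1 : (U * NormedSpace.exp ((0:ℝ) • A) * A) i j = (U * A) i j := by
      simp [NormedSpace.exp_zero]
    have e2 : (U * NormedSpace.exp ((0:ℝ) • A) * A * A) i j = (U * A * A) i j := by
      simp [NormedSpace.exp_zero]
    simpa [hz0 i j, e1, e2, Function.comp_def, Pi.mul_def] using hdiv
  have hsum : HasDerivAt h (∑ i, ∑ j,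
      ((((U * A * A) i j * conj (U i j) + (U * A) i j * conj ((U * A) i j)).re *
          ‖U i j‖ -
          ((U * A) i j * conj (U i j)).re *
            (((U * A) i j * conj (U i j)).re / ‖U i j‖)) /
        (‖U i j‖) ^ 2)) 0 := by
    rw [hh]
    exact HasDerivAt.fun_sum fun i _ => HasDerivAt.fun_sum fun j _ => hterm i j
  -- identify the value with the target
  have hval : (∑ i, ∑ j,
      ((((U * A * A) i j * conj (U i j) + (U * A) i j * conj ((U * A) i j)).re *
          ‖U i j‖ -
          ((U * A) i j * conj (U i j)).re *
            (((U * A) i j * conj (U i j)).re / ‖U i j‖)) /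
        (‖U i j‖) ^ 2))
      = (Matrix.trace (Sᴴ * U * (A * A))).re +
        ∑ i, ∑ j, (((U * A) i j * conj (S i j)).im) ^ 2 / ‖U i j‖ := by
    have htr : (Matrix.trace (Sᴴ * U * (A * A))).re
        = ∑ i, ∑ j, ((U * A * A) i j * conj (S i j)).re := by
      rw [mul_assoc, ← mul_assoc U A A]
      rw [Matrix.trace]
      simp only [Matrix.diag_apply, Matrix.mul_apply, Matrix.conjTranspose_apply, Complex.star_def]
      rw [Complex.re_sum]
      rw [Finset.sum_comm]
      congr 1; funext i
      rw [Complex.re_sum]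
      congr 1; funext j
      rw [mul_comm]
    rw [htr, ← Finset.sum_add_distrib]
    congr 1; funext i
    rw [← Finset.sum_add_distrib]
    congr 1; funext j
    have := key_alg (U i j) ((U * A) i j) ((U * A * A) i j) (hne i j)
    rw [this, hS]
    simp [csgn]
  rw [hval] at hsum
  exact hsum.congr_of_eventuallyEq heq
end

section
/- Let U ∈ U(N) be a circulant self-adjoint unitary matrix with nonzero entries, U_{ij} = γ_{i−j} (indices mod N) with γ_i ≠ 0 for all i. Then Φ(U, U) = N·(−1/|γ₀| + Σ_i |γ_i|). -/
open scoped Matrix ComplexConjugate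

/-- `Φ(U,B) = Tr(S*·U·B²) − ∑_{i,j} (Re[(UB)_{ij}·conj S_{ij}])²/|U_{ij}|`,
where `S_{ij} = sgn(U_{ij})`. -/
noncomputable def Phi {N : ℕ} (U B : Matrix (Fin N) (Fin N) ℂ) : ℝ :=
  (Matrix.trace ((Matrix.of fun i j => csgn (U i j))ᴴ * U * (B * B))).re -
    ∑ i, ∑ j, (((U * B) i j * conj (csgn (U i j))).re) ^ 2 / ‖U i j‖

lemma conj_csgn_mul {z : ℂ} (hz : z ≠ 0) : conj (csgn z) * z = (‖z‖ : ℂ) := by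
  have ha : (‖z‖ : ℝ) ≠ 0 := norm_ne_zero_iff.mpr hz
  unfold csgn
  rw [map_div₀, Complex.conj_ofReal, div_mul_eq_mul_div, mul_comm, Complex.mul_conj,
    Complex.normSq_eq_norm_sq]
  push_cast
  rw [sq]
  field_simp

lemma re_conj_csgn_sq {z : ℂ} (hz : z ≠ 0) (hr : conj z = z) :
    ((conj (csgn z)).re) ^ 2 = 1 := by
  have him : z.im = 0 := Complex.conj_eq_iff_im.mp hr
  have hz' : z = (z.re : ℂ) := Complex.ext rfl (by simp [him])
  have hre : z.re ≠ 0 := fun h => hz (by rw [hz', h]; simp)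
  unfold csgn
  rw [hz', Complex.norm_real, Real.norm_eq_abs, ← Complex.ofReal_div, Complex.conj_ofReal, Complex.ofReal_re,
    div_pow, sq_abs]
  field_simp

/-- For a circulant (`U_{ij} = γ_{i−j}`) self-adjoint unitary matrix
with nonzero entries, `Φ(U,U) = N·(−1/|γ₀| + ∑_i |γ_i|)`. -/
theorem stmt17 (N : ℕ) (hN : 0 < N) (γ : Fin N → ℂ) (hγ : ∀ i, γ i ≠ 0)
    (U : Matrix (Fin N) (Fin N) ℂ)
    (hU : U ∈ Matrix.unitaryGroup (Fin N) ℂ)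
    (hcirc : ∀ i j, U i j = γ (i - j))
    (hsa : U.IsHermitian) :
    Phi U U = N * (-(1 / ‖γ ⟨0, hN⟩‖) + ∑ i, ‖γ i‖) := by
  haveI : NeZero N := ⟨hN.ne'⟩
  have h00 : (⟨0, hN⟩ : Fin N) = 0 := rfl
  have hU2 : U * U = 1 := by
    have h := hU.1
    rwa [Matrix.star_eq_conjTranspose, hsa.eq] at h
  have hγ0conj : conj (γ 0) = γ 0 := by
    have := congrFun (congrFun hsa.eq 0) 0
    simpa [Matrix.conjTranspose_apply, hcirc, sub_self] using this
  unfold Phi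
  rw [hU2, mul_one]
  have htr : (Matrix.trace ((Matrix.of fun i j => csgn (U i j))ᴴ * U)).re
      = N * ∑ i, ‖γ i‖ := by
    have key : Matrix.trace ((Matrix.of fun i j => csgn (U i j))ᴴ * U)
        = ((N * ∑ i, ‖γ i‖ : ℝ) : ℂ) := by
      rw [Matrix.trace]
      simp only [Matrix.diag_apply, Matrix.mul_apply, Matrix.conjTranspose_apply,
        Matrix.of_apply, Complex.star_def]
      have : ∀ j i : Fin N, conj (csgn (U i j)) * U i j = (‖γ (i - j)‖ : ℂ) := by
        intro j i
        rw [conj_csgn_mul (by rw [hcirc]; exact hγ _), hcirc]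
      simp only [this]
      push_cast
      rw [Finset.sum_comm]
      calc ∑ i : Fin N, ∑ j : Fin N, ((‖γ (i - j)‖ : ℝ) : ℂ)
          = ∑ i : Fin N, ∑ k : Fin N, ((‖γ k‖ : ℝ) : ℂ) := by
            refine Finset.sum_congr rfl fun i _ => ?_
            exact Fintype.sum_equiv (Equiv.subLeft i) _ _ (fun j => rfl)
        _ = (N : ℂ) * ∑ k : Fin N, ((‖γ k‖ : ℝ) : ℂ) := by
            rw [Finset.sum_const, Finset.card_univ, Fintype.card_fin, nsmul_eq_mul]
    rw [key, Complex.ofReal_re]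
  rw [htr]
  have hsum2 : ∑ i : Fin N, ∑ j : Fin N,
      (((1 : Matrix (Fin N) (Fin N) ℂ) i j * conj (csgn (U i j))).re) ^ 2 / ‖U i j‖
      = N * (1 / ‖γ 0‖) := by
    have hterm : ∀ i j : Fin N,
        (((1 : Matrix (Fin N) (Fin N) ℂ) i j * conj (csgn (U i j))).re) ^ 2 / ‖U i j‖
        = if i = j then 1 / ‖γ 0‖ else 0 := by
      intro i j
      by_cases h : i = j
      · subst h
        have hUii : U i i = γ 0 := by rw [hcirc, sub_self]
        rw [Matrix.one_apply_eq, one_mul, hUii, re_conj_csgn_sq (hγ 0) hγ0conj, if_pos rfl]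
      · rw [Matrix.one_apply_ne h, if_neg h, zero_mul, Complex.zero_re]
        simp
    simp only [hterm]
    simp [Finset.sum_ite_eq, Finset.card_univ]
  rw [hsum2, h00]
  ring
end

section
/- Let N ≥ 1 and let U ∈ O(N) be a circulant symmetric orthogonal matrix with nonzero entries, U_{ij} = γ_{j−i} (indices mod N), γ_i ≠ 0 for all i. Let e = 1 if N is odd and e = 0 if N is even. Let F = (1/√N)(w^{ij})_{i,j=0}^{N−1} with w = e^{2πi/N} be the rescaled Fourier matrix, and consider the finite set of circulant symmetric orthogonal matrices B = F·diag(β)·F* with β ∈ {±1}^N satisfying β_i = β_{−i} (indices mod N). Then the average of Φ(U,B) over this set (uniform probability) equals N·Σ_i |γ_i| − (1/|γ₀| + (1−e)/|γ_{N/2}| + ((N−2+e)/N)·Σ_i 1/|γ_i|), where the term (1−e)/|γ_{N/2}| is present only when N is even. -/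
open scoped Matrix ComplexConjugate

/-- the rescaled Fourier matrix `F = (1/√N)(w^{ij})`, `w = e^{2πi/N}`. -/
noncomputable def FourierMat (N : ℕ) : Matrix (Fin N) (Fin N) ℂ :=
  Matrix.of fun i j =>
    Complex.exp (2 * Real.pi * Complex.I * (i : ℕ) * (j : ℕ) / N) / Real.sqrt N

set_option linter.unusedSectionVars false
set_option maxHeartbeats 1000000

open Finset


noncomputable def om (N : ℕ) : ℂ := Complex.exp (2*Real.pi*Complex.I/N)
noncomputable def eps {N : ℕ} (b : Fin N → Bool) (k : Fin N) : ℂ := if b k then 1 else -1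

lemma eps_sq {N : ℕ} (b : Fin N → Bool) (k : Fin N) : eps b k * eps b k = 1 := by
  unfold eps; split <;> ring

lemma eps_conj {N : ℕ} (b : Fin N → Bool) (k : Fin N) : conj (eps b k) = eps b k := by
  unfold eps; split <;> simp

variable {N : ℕ} [NeZero N]

lemma om_prim : IsPrimitiveRoot (om N) N := Complex.isPrimitiveRoot_exp N (NeZero.ne N)
lemma om_ne : om N ≠ 0 := Complex.exp_ne_zero _
lemma om_pow_N : om N ^ (N:ℤ) = 1 := by rw [zpow_natCast]; exact om_prim.pow_eq_one

lemma om_congr {a b : ℤ} (h : a ≡ b [ZMOD N]) : om N ^ a = om N ^ b := by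
  obtain ⟨q, hq⟩ := Int.ModEq.dvd h.symm
  have : om N ^ a = om N ^ b * om N ^ ((N:ℤ)*q) := by
    rw [← zpow_add₀ om_ne]; congr 1; omega
  rw [this, zpow_mul, om_pow_N, one_zpow, mul_one]

lemma om_conj : conj (om N) = (om N)⁻¹ := by
  rw [om, ← Complex.exp_conj, ← Complex.exp_neg]
  congr 1
  simp [map_div₀, Complex.conj_I, map_ofNat]
  ring

lemma om_conj_zpow (z : ℤ) : conj (om N ^ z) = om N ^ (-z) := by
  rw [map_zpow₀, om_conj, inv_zpow, ← zpow_neg]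

lemma om_pow_nat (m : ℕ) : Complex.exp (2*Real.pi*Complex.I*m/N) = om N ^ m := by
  rw [om, ← Complex.exp_nat_mul]
  congr 1
  ring

lemma sum_om (d : ℤ) : ∑ k : Fin N, om N ^ (d * (k:ℤ)) = if (N:ℤ) ∣ d then (N:ℂ) else 0 := by
  have hc : ∀ k : Fin N, om N ^ (d * (k:ℤ)) = (om N ^ d) ^ (k:ℕ) := by
    intro k; rw [zpow_mul, zpow_natCast]
  simp_rw [hc]
  rw [Fin.sum_univ_eq_sum_range (fun k => (om N ^ d) ^ k)]
  by_cases h : (N:ℤ) ∣ d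
  · have : om N ^ d = 1 := by
      obtain ⟨q, hq⟩ := h; rw [hq, zpow_mul, om_pow_N, one_zpow]
    simp [this, h]
  · have hne : om N ^ d ≠ 1 := fun hcon => h (om_prim.zpow_eq_one_iff_dvd d |>.mp hcon)
    rw [geom_sum_eq hne]
    have : (om N ^ d) ^ N = 1 := by
      rw [← zpow_natCast, ← zpow_mul, mul_comm, zpow_mul, om_pow_N, one_zpow]
    simp [this, h]

lemma fz_neg (a : Fin N) : ((-a : Fin N) : ℤ) ≡ -(a:ℤ) [ZMOD N] := by
  have h : ((-a : Fin N) : ℕ) = (N - a.val) % N := Fin.neg_def a ▸ rfl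
  have hlt := a.isLt
  have h2 : ((-a : Fin N) : ℤ) = (((N - a.val) % N : ℕ) : ℤ) := by exact_mod_cast congrArg (Nat.cast : ℕ → ℤ) h
  rw [Int.ModEq, h2, Int.natCast_mod, Nat.cast_sub (le_of_lt hlt), Int.emod_emod_of_dvd _ dvd_rfl]
  have : (N:ℤ) - (a:ℤ) ≡ 0 - (a:ℤ) [ZMOD N] := Int.ModEq.sub_right _ (Int.modEq_zero_iff_dvd.mpr dvd_rfl)
  simpa using this

lemma fz_add (a b : Fin N) : ((a + b : Fin N) : ℤ) ≡ (a:ℤ) + b [ZMOD N] := by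
  have h : ((a + b : Fin N) : ℕ) = (a.val + b.val) % N := Fin.add_def a b ▸ rfl
  have h2 : ((a + b : Fin N) : ℤ) = (((a.val + b.val) % N : ℕ) : ℤ) := by exact_mod_cast congrArg (Nat.cast : ℕ → ℤ) h
  rw [Int.ModEq, h2, Int.natCast_mod, Int.emod_emod_of_dvd _ dvd_rfl]
  push_cast
  rfl

lemma fz_sub (a b : Fin N) : ((a - b : Fin N) : ℤ) ≡ (a:ℤ) - b [ZMOD N] := by
  rw [sub_eq_add_neg a b]
  calc ((a + (-b) : Fin N) : ℤ) ≡ (a:ℤ) + ((-b : Fin N):ℤ) [ZMOD N] := fz_add a (-b)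
    _ ≡ (a:ℤ) + (-(b:ℤ)) [ZMOD N] := Int.ModEq.add_left _ (fz_neg b)
    _ = (a:ℤ) - b := by ring

lemma fin_eq_of_modeq {a b : Fin N} (h : (a:ℤ) ≡ (b:ℤ) [ZMOD N]) : a = b := by
  have ha : ((a:ℕ):ℤ) < N := by exact_mod_cast a.isLt
  have hb : ((b:ℕ):ℤ) < N := by exact_mod_cast b.isLt
  have ha0 : (0:ℤ) ≤ (a:ℕ) := Int.natCast_nonneg _
  have hb0 : (0:ℤ) ≤ (b:ℕ) := Int.natCast_nonneg _
  obtain ⟨q, hq⟩ := Int.ModEq.dvd h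
  have hq' : (b:ℤ) - a = N * q := hq
  have hN' : (0:ℤ) < N := by exact_mod_cast Nat.pos_of_ne_zero (NeZero.ne N)
  have hq0 : q = 0 := by
    rcases lt_trichotomy q 0 with hlt|heq|hgt
    · nlinarith
    · exact heq
    · nlinarith
  rw [hq0, mul_zero] at hq'
  exact Fin.ext (by omega)

lemma fin_dvd_iff (a b : Fin N) : (N:ℤ) ∣ ((a:ℤ) - b) ↔ a = b := by
  constructor
  · intro h
    exact (fin_eq_of_modeq ((Int.modEq_iff_dvd).mpr h)).symm
  · rintro rfl; simp

lemma sum_shift {M : Type*} [AddCommMonoid M] (f : Fin N → M) (i : Fin N) :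
    ∑ j : Fin N, f (j - i) = ∑ d : Fin N, f d :=
  Fintype.sum_equiv (Equiv.subRight i) _ _ (fun _ => rfl)

lemma sum_shift' {M : Type*} [AddCommMonoid M] (f : Fin N → M) (i : Fin N) :
    ∑ j : Fin N, f (i - j) = ∑ d : Fin N, f d :=
  Fintype.sum_equiv (Equiv.subLeft i) _ _ (fun _ => rfl)

lemma sum_neg_reindex {M : Type*} [AddCommMonoid M] (f : Fin N → M) :
    ∑ k : Fin N, f (-k) = ∑ k : Fin N, f k :=
  Fintype.sum_equiv (Equiv.neg _) _ _ (fun _ => rfl)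

lemma two_torsion_iff (hN : 0 < N) (d : Fin N) :
    d + d = 0 ↔ (d = ⟨0, hN⟩ ∨ (N % 2 = 0 ∧ d = ⟨N/2, Nat.div_lt_self hN one_lt_two⟩)) := by
  have hv : ((d + d : Fin N) : ℕ) = (d.val + d.val) % N := Fin.add_def d d ▸ rfl
  have hd := d.isLt
  constructor
  · intro h
    have h0 : ((d + d : Fin N) : ℕ) = 0 := by rw [h]; rfl
    rw [hv] at h0
    obtain ⟨c, hc⟩ := Nat.dvd_of_mod_eq_zero h0
    have hc2 : c ≤ 1 := by
      by_contra hcon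
      have : N * 2 ≤ N * c := Nat.mul_le_mul_left N (by omega)
      omega
    interval_cases c
    · left; exact Fin.ext (by simp; omega)
    · right; exact ⟨by omega, Fin.ext (by simp; omega)⟩
  · intro h
    rcases h with h | ⟨h1, h2⟩
    · subst h; apply Fin.ext; rw [hv]; simp
    · subst h2
      apply Fin.ext
      rw [hv]
      have : (N/2 : ℕ) + N/2 = N := by omega
      simp only [this]
      exact Nat.mod_self N

variable {T : Finset (Fin N → Bool)}
  (hT : T = Finset.univ.filter fun b : Fin N → Bool => ∀ i, b i = b (-i))

include hT

lemma mem_T_iff {b : Fin N → Bool} : b ∈ T ↔ ∀ i, b i = b (-i) := by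
  subst hT; simp

lemma T_card_pos : 0 < T.card := by
  refine Finset.card_pos.mpr ⟨fun _ => true, ?_⟩
  rw [mem_T_iff hT]; intro i; rfl

lemma eps_neg {b : Fin N → Bool} (hb : b ∈ T) (k : Fin N) : eps b (-k) = eps b k := by
  unfold eps; rw [← (mem_T_iff hT).mp hb k]

lemma sum_eps_T (k l : Fin N) (h1 : l ≠ k) (h2 : l ≠ -k) :
    ∑ b ∈ T, eps b k * eps b l = 0 := by
  have hkl : k ≠ l := h1.symm
  refine Finset.sum_involution
    (fun b _ => fun i => if i = k ∨ i = -k then !b i else b i) ?_ ?_ ?_ ?_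
  · intro b hb
    have h3 : eps (fun i => if i = k ∨ i = -k then !b i else b i) k = - eps b k := by
      simp only [eps, if_pos (Or.inl rfl)]
      cases b k <;> simp
    have h4 : eps (fun i => if i = k ∨ i = -k then !b i else b i) l = eps b l := by
      have hbl : (if l = k ∨ l = -k then !b l else b l) = b l := if_neg (by tauto)
      simp only [eps, hbl]
    rw [h3, h4]; ring
  · intro b hb _
    intro hcon
    have := congrFun hcon k
    simp at this
  · intro b hb
    rw [mem_T_iff hT] at hb ⊢
    intro i
    by_cases h : i = k ∨ i = -k
    · have h' : -i = k ∨ -i = -k := by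
        rcases h with h | h
        · right; rw [h]
        · left; rw [h, neg_neg]
      simp only [if_pos h, if_pos h', hb i]
    · have h' : ¬(-i = k ∨ -i = -k) := by
        intro hcon
        rcases hcon with hc | hc
        · exact h (Or.inr (by rw [← hc, neg_neg]))
        · exact h (Or.inl (neg_injective hc))
      simp only [if_neg h, if_neg h', hb i]
  · intro b hb
    funext i
    by_cases h : i = k ∨ i = -k <;> simp [h]

lemma sum_eps_T_same (k l : Fin N) (h : l = k ∨ l = -k) :
    ∑ b ∈ T, eps b k * eps b l = T.card := by
  have : ∀ b ∈ T, eps b k * eps b l = 1 := by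
    intro b hb
    rcases h with h | h
    · subst h; exact eps_sq b l
    · subst h; rw [eps_neg hT hb k]; exact eps_sq b k
  rw [Finset.sum_congr rfl this]
  simp

omit hT

lemma Bent (b : Fin N → Bool) (i j : Fin N) :
    (FourierMat N * Matrix.diagonal (fun i => if b i then (1:ℂ) else -1) * (FourierMat N)ᴴ) i j
      = (N:ℂ)⁻¹ * ∑ k, eps b k * om N ^ (((i:ℤ) - (j:ℤ)) * (k:ℤ)) := by
  rw [Matrix.mul_apply, Finset.mul_sum]
  refine Finset.sum_congr rfl fun l _ => ?_
  rw [Matrix.mul_diagonal, Matrix.conjTranspose_apply]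
  simp only [FourierMat, Matrix.of_apply, Complex.star_def]
  have hsq : (Real.sqrt N : ℂ) * (Real.sqrt N : ℂ) = (N : ℂ) := by
    rw [← Complex.ofReal_mul, Real.mul_self_sqrt (Nat.cast_nonneg N)]
    simp
  have e1 : Complex.exp (2*Real.pi*Complex.I*(i:ℕ)*(l:ℕ)/N) = om N ^ ((i:ℕ)*(l:ℕ)) := by
    rw [← om_pow_nat ((i:ℕ)*(l:ℕ))]
    congr 1
    push_cast
    ring
  have e2 : conj (Complex.exp (2*Real.pi*Complex.I*(j:ℕ)*(l:ℕ)/N)) = om N ^ (-(((j:ℕ)*(l:ℕ) : ℕ) : ℤ)) := by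
    have : Complex.exp (2*Real.pi*Complex.I*(j:ℕ)*(l:ℕ)/N) = om N ^ ((j:ℕ)*(l:ℕ)) := by
      rw [← om_pow_nat ((j:ℕ)*(l:ℕ))]; congr 1; push_cast; ring
    rw [this, map_pow, om_conj]
    rw [inv_pow, ← zpow_natCast, ← zpow_neg]
  rw [map_div₀, e2, Complex.conj_ofReal]
  rw [div_mul_eq_mul_div, div_mul_div_comm, e1]
  rw [hsq]
  rw [div_eq_inv_mul]
  congr 1
  have : om N ^ ((i:ℕ)*(l:ℕ)) = om N ^ (((i:ℕ)*(l:ℕ) : ℕ) : ℤ) := by rw [zpow_natCast]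
  rw [mul_comm (om N ^ ((i:ℕ)*(l:ℕ))) _, mul_assoc, this, ← zpow_add₀ om_ne]
  show eps b l * _ = _
  congr 2
  push_cast
  ring

lemma helper_mul (c : ℂ) (f g : Fin N → ℂ) :
    (c * ∑ k, f k) * (c * ∑ l, g l) = c * c * ∑ k, ∑ l, f k * g l := by
  rw [← Finset.sum_mul_sum]; ring

lemma Bsq (b : Fin N → Bool) :
    (FourierMat N * Matrix.diagonal (fun i => if b i then (1:ℂ) else -1) * (FourierMat N)ᴴ) *
    (FourierMat N * Matrix.diagonal (fun i => if b i then (1:ℂ) else -1) * (FourierMat N)ᴴ) = 1 := by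
  ext i j
  rw [Matrix.mul_apply]
  simp_rw [Bent, helper_mul]
  rw [← Finset.mul_sum, Finset.sum_comm]
  have hin : ∀ k : Fin N, (∑ m : Fin N, ∑ l : Fin N,
      (eps b k * om N ^ (((i:ℤ) - m) * k)) * (eps b l * om N ^ (((m:ℤ) - j) * l)))
      = eps b k * eps b k * om N ^ (((i:ℤ) - j) * k) * N := by
    intro k
    rw [Finset.sum_comm]
    have h2 : ∀ l : Fin N, (∑ m : Fin N,
        (eps b k * om N ^ (((i:ℤ) - m) * k)) * (eps b l * om N ^ (((m:ℤ) - j) * l)))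
        = (eps b k * eps b l * om N ^ ((i:ℤ)*k - (j:ℤ)*l)) * (if (N:ℤ) ∣ ((l:ℤ)-(k:ℤ)) then (N:ℂ) else 0) := by
      intro l
      rw [← sum_om ((l:ℤ)-(k:ℤ)), Finset.mul_sum]
      refine Finset.sum_congr rfl fun m _ => ?_
      have e : om N ^ (((i:ℤ) - m) * k) * om N ^ (((m:ℤ) - j) * l)
          = om N ^ ((i:ℤ)*k - (j:ℤ)*l) * om N ^ (((l:ℤ)-(k:ℤ)) * m) := by
        rw [← zpow_add₀ om_ne, ← zpow_add₀ om_ne]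
        congr 1
        ring
      calc (eps b k * om N ^ (((i:ℤ) - m) * k)) * (eps b l * om N ^ (((m:ℤ) - j) * l))
          = eps b k * eps b l * (om N ^ (((i:ℤ) - m) * k) * om N ^ (((m:ℤ) - j) * l)) := by ring
        _ = eps b k * eps b l * (om N ^ ((i:ℤ)*k - (j:ℤ)*l) * om N ^ (((l:ℤ)-(k:ℤ)) * m)) := by rw [e]
        _ = eps b k * eps b l * om N ^ ((i:ℤ)*k - (j:ℤ)*l) * om N ^ (((l:ℤ)-(k:ℤ)) * m) := by ring
    simp_rw [h2, fin_dvd_iff]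
    simp only [mul_ite, mul_zero]
    rw [Finset.sum_ite_eq' Finset.univ k
      (fun l => eps b k * eps b l * om N ^ ((i:ℤ)*k - (j:ℤ)*l) * N)]
    simp only [Finset.mem_univ, if_pos]
    congr 2
    ring
  simp_rw [hin, eps_sq, one_mul]
  rw [← Finset.sum_mul, sum_om ((i:ℤ)-(j:ℤ))]
  simp only [fin_dvd_iff]
  rw [Matrix.one_apply]
  have hNne : (N:ℂ) ≠ 0 := Nat.cast_ne_zero.mpr (NeZero.ne N)
  split_ifs with h
  · field_simp
  · simp

include hT in
lemma sum_eps_full (k l : Fin N) :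
    ∑ b ∈ T, eps b k * eps b l = if (l = k ∨ l = -k) then (T.card:ℂ) else 0 := by
  by_cases h : l = k ∨ l = -k
  · rw [if_pos h, sum_eps_T_same hT k l h]
  · push_neg at h
    rw [if_neg (by tauto), sum_eps_T hT k l h.1 h.2]

include hT in
lemma key (m m' j : Fin N) :
    ∑ b ∈ T, ((N:ℂ)⁻¹ * ∑ k, eps b k * om N ^ (((m:ℤ)-(j:ℤ))*(k:ℤ)))
           * ((N:ℂ)⁻¹ * ∑ l, eps b l * om N ^ (((m':ℤ)-(j:ℤ))*(l:ℤ)))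
    = (T.card:ℂ) * ((N:ℂ)⁻¹*(N:ℂ)⁻¹) *
      ((if (N:ℤ) ∣ ((m:ℤ)+(m':ℤ)-2*(j:ℤ)) then (N:ℂ) else 0)
        + (if m = m' then (N:ℂ) else 0)
        - ∑ k ∈ Finset.univ.filter (fun k : Fin N => k + k = 0), om N ^ (((m:ℤ)-(m':ℤ))*(k:ℤ))) := by
  simp_rw [helper_mul]
  rw [← Finset.mul_sum, Finset.sum_comm]
  have hswap : ∀ k : Fin N, (∑ b ∈ T, ∑ l : Fin N,
      (eps b k * om N ^ (((m:ℤ)-(j:ℤ))*(k:ℤ))) * (eps b l * om N ^ (((m':ℤ)-(j:ℤ))*(l:ℤ))))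
      = ∑ l : Fin N, ∑ b ∈ T,
      (eps b k * om N ^ (((m:ℤ)-(j:ℤ))*(k:ℤ))) * (eps b l * om N ^ (((m':ℤ)-(j:ℤ))*(l:ℤ))) :=
    fun k => Finset.sum_comm
  simp_rw [hswap]
  have hbl : ∀ (k l : Fin N), (∑ b ∈ T,
      (eps b k * om N ^ (((m:ℤ)-(j:ℤ))*(k:ℤ))) * (eps b l * om N ^ (((m':ℤ)-(j:ℤ))*(l:ℤ))))
      = (if (l = k ∨ l = -k) then (T.card:ℂ) else 0) *
        (om N ^ (((m:ℤ)-(j:ℤ))*(k:ℤ)) * om N ^ (((m':ℤ)-(j:ℤ))*(l:ℤ))) := by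
    intro k l
    rw [← sum_eps_full hT k l, Finset.sum_mul]
    exact Finset.sum_congr rfl fun b _ => by ring
  simp_rw [hbl]
  set G : Fin N → Fin N → ℂ :=
    fun k l => om N ^ (((m:ℤ)-(j:ℤ))*(k:ℤ)) * om N ^ (((m':ℤ)-(j:ℤ))*(l:ℤ)) with hG
  have hsplit : ∀ (k l : Fin N),
      (if (l = k ∨ l = -k) then (T.card:ℂ) else 0) * G k l
      = (T.card:ℂ) * ((if l = k then G k l else 0) + (if l = -k then G k l else 0)
          - (if l = k ∧ k + k = 0 then G k l else 0)) := by
    intro k l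
    have hiff : (-k = k) ↔ (k + k = 0) := neg_eq_iff_add_eq_zero
    by_cases h1 : l = k
    · by_cases h2 : k + k = 0
      · have h3 : l = -k := h1.trans (hiff.mpr h2).symm
        rw [if_pos (Or.inl h1), if_pos h1, if_pos h3, if_pos ⟨h1, h2⟩]
        ring
      · have h3 : ¬ l = -k := fun hc => h2 (hiff.mp (hc.symm.trans h1))
        rw [if_pos (Or.inl h1), if_pos h1, if_neg h3, if_neg (fun hc => h2 hc.2)]
        ring
    · by_cases h3 : l = -k
      · rw [if_pos (Or.inr h3), if_neg h1, if_pos h3, if_neg (fun hc => h1 hc.1)]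
        ring
      · rw [if_neg (not_or.mpr ⟨h1, h3⟩), if_neg h1, if_neg h3, if_neg (fun hc => h1 hc.1)]
        ring
  change (N:ℂ)⁻¹ * (N:ℂ)⁻¹ * ∑ k : Fin N, ∑ l : Fin N, (if l = k ∨ l = -k then (T.card:ℂ) else 0) * G k l = _
  simp_rw [hsplit, ← Finset.mul_sum]
  have hGkk : ∀ k : Fin N, G k k = om N ^ (((m:ℤ)+(m':ℤ)-2*(j:ℤ))*(k:ℤ)) := by
    intro k
    rw [hG]
    show om N ^ _ * om N ^ _ = _
    rw [← zpow_add₀ om_ne]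
    congr 1
    ring
  have hGkn : ∀ k : Fin N, G k (-k) = om N ^ (((m:ℤ)-(m':ℤ))*(k:ℤ)) := by
    intro k
    rw [hG]
    show om N ^ _ * om N ^ (((m':ℤ)-(j:ℤ)) * (((-k : Fin N)):ℤ)) = _
    rw [om_congr (Int.ModEq.mul_left ((m':ℤ)-(j:ℤ)) (fz_neg k)), ← zpow_add₀ om_ne]
    congr 1
    ring
  have hl : ∀ k : Fin N, (∑ l : Fin N, ((if l = k then G k l else 0) + (if l = -k then G k l else 0)
          - (if l = k ∧ k + k = 0 then G k l else 0)))
      = G k k + G k (-k) - (if k + k = 0 then G k k else 0) := by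
    intro k
    rw [Finset.sum_sub_distrib, Finset.sum_add_distrib]
    congr 1
    · congr 1
      · rw [Finset.sum_ite_eq' Finset.univ k (G k)]; simp
      · rw [Finset.sum_ite_eq' Finset.univ (-k) (G k)]; simp
    · by_cases hq : k + k = 0
      · simp only [hq, and_true]
        rw [Finset.sum_ite_eq' Finset.univ k (G k)]; simp [hq]
      · simp [hq]
  simp_rw [hl]
  rw [Finset.sum_sub_distrib, Finset.sum_add_distrib]
  simp_rw [hGkk, hGkn]
  rw [sum_om, sum_om]
  simp only [fin_dvd_iff]
  have hfilt : (∑ k : Fin N, (if k + k = 0 then om N ^ (((m:ℤ)+(m':ℤ)-2*(j:ℤ))*(k:ℤ)) else 0))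
      = ∑ k ∈ Finset.univ.filter (fun k : Fin N => k + k = 0), om N ^ (((m:ℤ)-(m':ℤ))*(k:ℤ)) := by
    rw [Finset.sum_filter]
    refine Finset.sum_congr rfl fun k _ => ?_
    by_cases hq : k + k = 0
    · rw [if_pos hq, if_pos hq]
      have h2k : (N:ℤ) ∣ 2*(k:ℤ) := by
        have h1 : ((k + k : Fin N):ℤ) ≡ (k:ℤ) + (k:ℤ) [ZMOD N] := fz_add k k
        rw [hq] at h1
        have h2 : (0:ℤ) ≡ (k:ℤ) + (k:ℤ) [ZMOD N] := by simpa using h1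
        have h3 := Int.ModEq.dvd h2
        simpa [two_mul] using h3
      exact om_congr (by
        apply Int.ModEq.symm
        rw [Int.modEq_iff_dvd]
        have he : ((m:ℤ)+(m':ℤ)-2*(j:ℤ))*(k:ℤ) - ((m:ℤ)-(m':ℤ))*(k:ℤ) = (2*(k:ℤ)) * ((m':ℤ)-(j:ℤ)) := by ring
        rw [he]
        exact Dvd.dvd.mul_right h2k _)
    · rw [if_neg hq, if_neg hq]
  rw [hfilt]
  ring

variable {γ : Fin N → ℝ}

include hT in
lemma Psum (hac : ∀ s : Fin N, ∑ t, γ t * γ (t + s) = if s = 0 then 1 else 0)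
    (hsym : ∀ d, γ (-d) = γ d) (i j : Fin N) :
    ∑ b ∈ T, (∑ m, ((γ (m - i) : ℝ) : ℂ) * ((N:ℂ)⁻¹ * ∑ k, eps b k * om N ^ (((m:ℤ)-(j:ℤ))*(k:ℤ))))
           * (∑ m, ((γ (m - i) : ℝ) : ℂ) * ((N:ℂ)⁻¹ * ∑ k, eps b k * om N ^ (((m:ℤ)-(j:ℤ))*(k:ℤ))))
    = (T.card : ℂ) * ((N:ℂ)⁻¹ * (N:ℂ)⁻¹) *
        ((if (j-i) + (j-i) = 0 then (N:ℂ) else 0) + (N:ℂ)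
          - ((Finset.univ.filter (fun k : Fin N => k + k = 0)).card : ℂ)) := by
  have hacC : ∀ s : Fin N, ∑ t, ((γ t : ℝ):ℂ) * ((γ (t + s) : ℝ):ℂ) = if s = 0 then (1:ℂ) else 0 := by
    intro s
    have := hac s
    calc ∑ t, ((γ t : ℝ):ℂ) * ((γ (t + s) : ℝ):ℂ)
        = ((∑ t, γ t * γ (t + s) : ℝ) : ℂ) := by push_cast; rfl
      _ = _ := by rw [this]; split_ifs <;> simp
  -- expand the product of sums
  have hexp : ∀ b : Fin N → Bool, (∑ m, ((γ (m - i) : ℝ) : ℂ) * ((N:ℂ)⁻¹ * ∑ k, eps b k * om N ^ (((m:ℤ)-(j:ℤ))*(k:ℤ))))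
           * (∑ m, ((γ (m - i) : ℝ) : ℂ) * ((N:ℂ)⁻¹ * ∑ k, eps b k * om N ^ (((m:ℤ)-(j:ℤ))*(k:ℤ))))
      = ∑ m, ∑ m', (((γ (m - i) : ℝ) : ℂ) * ((γ (m' - i) : ℝ) : ℂ)) *
          (((N:ℂ)⁻¹ * ∑ k, eps b k * om N ^ (((m:ℤ)-(j:ℤ))*(k:ℤ)))
            * ((N:ℂ)⁻¹ * ∑ k, eps b k * om N ^ (((m':ℤ)-(j:ℤ))*(k:ℤ)))) := by
    intro b
    rw [Finset.sum_mul_sum]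
    exact Finset.sum_congr rfl fun m _ => Finset.sum_congr rfl fun m' _ => by ring
  simp_rw [hexp]
  rw [Finset.sum_comm]
  have hswap2 : ∀ m : Fin N, (∑ b ∈ T, ∑ m' : Fin N, (((γ (m - i) : ℝ) : ℂ) * ((γ (m' - i) : ℝ) : ℂ)) *
          (((N:ℂ)⁻¹ * ∑ k, eps b k * om N ^ (((m:ℤ)-(j:ℤ))*(k:ℤ)))
            * ((N:ℂ)⁻¹ * ∑ k, eps b k * om N ^ (((m':ℤ)-(j:ℤ))*(k:ℤ)))))
      = ∑ m' : Fin N, (((γ (m - i) : ℝ) : ℂ) * ((γ (m' - i) : ℝ) : ℂ)) *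
          ∑ b ∈ T, (((N:ℂ)⁻¹ * ∑ k, eps b k * om N ^ (((m:ℤ)-(j:ℤ))*(k:ℤ)))
            * ((N:ℂ)⁻¹ * ∑ k, eps b k * om N ^ (((m':ℤ)-(j:ℤ))*(k:ℤ)))) := by
    intro m
    rw [Finset.sum_comm]
    exact Finset.sum_congr rfl fun m' _ => by rw [Finset.mul_sum]
  simp_rw [hswap2, key hT]
  -- now: ∑ m ∑ m' γγ * (c * R * (ifA + ifB - Sfilt))
  set c : ℂ := (T.card : ℂ)
  set R : ℂ := (N:ℂ)⁻¹ * (N:ℂ)⁻¹ with hR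
  set filt := Finset.univ.filter (fun k : Fin N => k + k = 0) with hfilt
  have hsplit3 : ∀ (m m' : Fin N), (((γ (m - i) : ℝ) : ℂ) * ((γ (m' - i) : ℝ) : ℂ)) *
      (c * R * ((if (N:ℤ) ∣ ((m:ℤ)+(m':ℤ)-2*(j:ℤ)) then (N:ℂ) else 0)
        + (if m = m' then (N:ℂ) else 0)
        - ∑ k ∈ filt, om N ^ (((m:ℤ)-(m':ℤ))*(k:ℤ))))
      = c * R * ((((γ (m - i) : ℝ) : ℂ) * ((γ (m' - i) : ℝ) : ℂ)) * (if m' = j + j - m then (N:ℂ) else 0)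
          + (((γ (m - i) : ℝ) : ℂ) * ((γ (m' - i) : ℝ) : ℂ)) * (if m' = m then (N:ℂ) else 0)
          - (((γ (m - i) : ℝ) : ℂ) * ((γ (m' - i) : ℝ) : ℂ)) * ∑ k ∈ filt, om N ^ (((m:ℤ)-(m':ℤ))*(k:ℤ))) := by
    intro m m'
    have hcong : ((j + j - m : Fin N):ℤ) ≡ (j:ℤ) + (j:ℤ) - (m:ℤ) [ZMOD N] :=
      (fz_sub (j+j) m).trans (Int.ModEq.sub_right _ (fz_add j j))
    have hiff : (N:ℤ) ∣ ((m:ℤ)+(m':ℤ)-2*(j:ℤ)) ↔ m' = j + j - m := by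
      constructor
      · intro h
        refine fin_eq_of_modeq (Int.ModEq.trans ?_ hcong.symm)
        rw [Int.modEq_iff_dvd]
        have : (j:ℤ) + (j:ℤ) - (m:ℤ) - (m':ℤ) = -((m:ℤ)+(m':ℤ)-2*(j:ℤ)) := by ring
        rw [this]
        exact h.neg_right
      · intro h
        subst h
        have h2 := hcong
        rw [Int.modEq_iff_dvd] at h2
        have : (m:ℤ)+((j + j - m : Fin N):ℤ)-2*(j:ℤ) = -(((j:ℤ) + (j:ℤ) - (m:ℤ)) - ((j + j - m : Fin N):ℤ)) := by ring
        rw [this]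
        exact h2.neg_right
    have heq2 : (m = m') ↔ (m' = m) := eq_comm
    rw [if_congr hiff rfl rfl, if_congr heq2 rfl rfl]
    ring
  simp_rw [hsplit3, ← Finset.mul_sum, Finset.sum_sub_distrib, Finset.sum_add_distrib]
  -- Term 1
  have hT1 : (∑ m : Fin N, ∑ m' : Fin N, (((γ (m - i) : ℝ) : ℂ) * ((γ (m' - i) : ℝ) : ℂ)) * (if m' = j + j - m then (N:ℂ) else 0))
      = (if (j-i) + (j-i) = 0 then (N:ℂ) else 0) := by
    have hin : ∀ m : Fin N, (∑ m' : Fin N, (((γ (m - i) : ℝ) : ℂ) * ((γ (m' - i) : ℝ) : ℂ)) * (if m' = j + j - m then (N:ℂ) else 0))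
        = ((γ (m - i) : ℝ) : ℂ) * ((γ ((j + j - m) - i) : ℝ) : ℂ) * N := by
      intro m
      simp_rw [mul_ite, mul_zero]
      rw [Finset.sum_ite_eq' Finset.univ (j + j - m) (fun m' => ((γ (m - i) : ℝ) : ℂ) * ((γ (m' - i) : ℝ) : ℂ) * N)]
      simp
    simp_rw [hin]
    have hfn : ∀ m : Fin N, ((γ (m - i) : ℝ) : ℂ) * ((γ ((j + j - m) - i) : ℝ) : ℂ) * N
        = (fun t => ((γ t : ℝ) : ℂ) * ((γ (t + (-((j-i) + (j-i)))) : ℝ) : ℂ) * N) (m - i) := by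
      intro m
      have h1 : (j + j - m) - i = -((m - i) + (-((j-i) + (j-i)))) := by abel
      rw [h1, hsym]
    simp_rw [hfn]
    rw [sum_shift (fun t => ((γ t : ℝ) : ℂ) * ((γ (t + (-((j-i) + (j-i)))) : ℝ) : ℂ) * N) i]
    rw [← Finset.sum_mul, hacC (-((j-i) + (j-i)))]
    have : (-((j-i) + (j-i)) = 0) ↔ ((j-i) + (j-i) = 0) := neg_eq_zero
    rw [if_congr this rfl rfl]
    split_ifs <;> ring
  have hT2 : (∑ m : Fin N, ∑ m' : Fin N, (((γ (m - i) : ℝ) : ℂ) * ((γ (m' - i) : ℝ) : ℂ)) * (if m' = m then (N:ℂ) else 0))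
      = (N:ℂ) := by
    have hin : ∀ m : Fin N, (∑ m' : Fin N, (((γ (m - i) : ℝ) : ℂ) * ((γ (m' - i) : ℝ) : ℂ)) * (if m' = m then (N:ℂ) else 0))
        = ((γ (m - i) : ℝ) : ℂ) * ((γ ((m - i) + 0) : ℝ) : ℂ) * N := by
      intro m
      simp_rw [mul_ite, mul_zero]
      rw [Finset.sum_ite_eq' Finset.univ m (fun m' => ((γ (m - i) : ℝ) : ℂ) * ((γ (m' - i) : ℝ) : ℂ) * N)]
      simp
    simp_rw [hin]
    rw [sum_shift (fun t => ((γ t : ℝ) : ℂ) * ((γ (t + 0) : ℝ) : ℂ) * N) i]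
    rw [← Finset.sum_mul, hacC 0]
    simp
  have hT3 : (∑ m : Fin N, ∑ m' : Fin N, (((γ (m - i) : ℝ) : ℂ) * ((γ (m' - i) : ℝ) : ℂ)) *
        ∑ k ∈ filt, om N ^ (((m:ℤ)-(m':ℤ))*(k:ℤ)))
      = (filt.card : ℂ) := by
    have hswap3 : ∀ m : Fin N, (∑ m' : Fin N, (((γ (m - i) : ℝ) : ℂ) * ((γ (m' - i) : ℝ) : ℂ)) *
          ∑ k ∈ filt, om N ^ (((m:ℤ)-(m':ℤ))*(k:ℤ)))
        = ∑ k ∈ filt, ∑ m' : Fin N, (((γ (m - i) : ℝ) : ℂ) * ((γ (m' - i) : ℝ) : ℂ)) * om N ^ (((m:ℤ)-(m':ℤ))*(k:ℤ)) := by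
      intro m
      simp_rw [Finset.mul_sum]
      rw [Finset.sum_comm]
    simp_rw [hswap3]
    rw [Finset.sum_comm]
    have hink : ∀ k, k ∈ filt → (∑ m : Fin N, ∑ m' : Fin N, (((γ (m - i) : ℝ) : ℂ) * ((γ (m' - i) : ℝ) : ℂ)) * om N ^ (((m:ℤ)-(m':ℤ))*(k:ℤ)))
        = 1 := by
      intro k _
      have hin2 : ∀ m : Fin N, (∑ m' : Fin N, (((γ (m - i) : ℝ) : ℂ) * ((γ (m' - i) : ℝ) : ℂ)) * om N ^ (((m:ℤ)-(m':ℤ))*(k:ℤ)))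
          = ∑ s : Fin N, (((γ (m - i) : ℝ) : ℂ) * ((γ (s + (m - i)) : ℝ) : ℂ)) * om N ^ (-(s:ℤ)*(k:ℤ)) := by
        intro m
        rw [← sum_shift (fun s => (((γ (m - i) : ℝ) : ℂ) * ((γ (s + (m - i)) : ℝ) : ℂ)) * om N ^ (-(s:ℤ)*(k:ℤ))) m]
        refine Finset.sum_congr rfl fun m' _ => ?_
        have h1 : (m' - m) + (m - i) = m' - i := by abel
        rw [h1]
        have h2 : om N ^ (-(((m' - m : Fin N)):ℤ)*(k:ℤ)) = om N ^ (((m:ℤ)-(m':ℤ))*(k:ℤ)) :=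
          om_congr (Int.ModEq.mul_right (k:ℤ) (by
            have := (fz_sub m' m).neg
            simpa using this.trans (by rw [neg_sub])))
        rw [h2]
      simp_rw [hin2]
      rw [Finset.sum_comm]
      have hin3 : ∀ s : Fin N, (∑ m : Fin N, (((γ (m - i) : ℝ) : ℂ) * ((γ (s + (m - i)) : ℝ) : ℂ)) * om N ^ (-(s:ℤ)*(k:ℤ)))
          = (if s = 0 then (1:ℂ) else 0) * om N ^ (-(s:ℤ)*(k:ℤ)) := by
        intro s
        rw [← Finset.sum_mul]
        congr 1
        have hfs : ∀ m : Fin N, ((γ (m - i) : ℝ) : ℂ) * ((γ (s + (m - i)) : ℝ) : ℂ)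
            = (fun t => ((γ t : ℝ) : ℂ) * ((γ (t + s) : ℝ) : ℂ)) (m - i) := by
          intro m
          simp only
          rw [add_comm s (m - i)]
        simp_rw [hfs]
        rw [sum_shift (fun t => ((γ t : ℝ) : ℂ) * ((γ (t + s) : ℝ) : ℂ)) i]
        exact hacC s
      simp_rw [hin3]
      simp only [ite_mul, one_mul, zero_mul]
      rw [Finset.sum_ite_eq' Finset.univ (0 : Fin N) (fun s => om N ^ (-(s:ℤ)*(k:ℤ)))]
      simp
    rw [Finset.sum_congr rfl hink]
    simp
  rw [hT1, hT2, hT3]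

lemma filt_eq_odd (hN : 0 < N) (hodd : N % 2 = 1) :
    Finset.univ.filter (fun k : Fin N => k + k = 0) = {(⟨0, hN⟩ : Fin N)} := by
  ext k
  simp only [Finset.mem_filter, Finset.mem_univ, true_and, Finset.mem_singleton,
    two_torsion_iff hN]
  constructor
  · rintro (h | ⟨h1, _⟩)
    · exact h
    · omega
  · intro h; exact Or.inl h

lemma filt_eq_even (hN : 0 < N) (heven : N % 2 = 0) :
    Finset.univ.filter (fun k : Fin N => k + k = 0)
      = {(⟨0, hN⟩ : Fin N), (⟨N/2, Nat.div_lt_self hN one_lt_two⟩ : Fin N)} := by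
  ext k
  simp only [Finset.mem_filter, Finset.mem_univ, true_and, Finset.mem_insert,
    Finset.mem_singleton, two_torsion_iff hN]
  tauto

lemma half_ne_zero (hN : 0 < N) (heven : N % 2 = 0) :
    (⟨0, hN⟩ : Fin N) ≠ (⟨N/2, Nat.div_lt_self hN one_lt_two⟩ : Fin N) := by
  intro h
  have := congrArg Fin.val h
  simp at this
  omega

lemma sum_two_torsion (hN : 0 < N) (e : ℝ) (he : e = if N % 2 = 1 then 1 else 0) (g : Fin N → ℝ) :
    ∑ d : Fin N, (if d + d = 0 then (1:ℝ) else 0) * g d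
      = g ⟨0, hN⟩ + (1 - e) * g ⟨N/2, Nat.div_lt_self hN one_lt_two⟩ := by
  rw [show (∑ d : Fin N, (if d + d = 0 then (1:ℝ) else 0) * g d)
      = ∑ d ∈ Finset.univ.filter (fun k : Fin N => k + k = 0), g d by
    rw [Finset.sum_filter]; exact Finset.sum_congr rfl fun d _ => by split_ifs <;> simp]
  rcases Nat.mod_two_eq_zero_or_one N with hp | hp
  · rw [filt_eq_even hN hp, Finset.sum_pair (half_ne_zero hN hp)]
    rw [he, if_neg (by omega)]
    ring
  · rw [filt_eq_odd hN hp, Finset.sum_singleton, he, if_pos hp]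
    ring

lemma filt_card (hN : 0 < N) (e : ℝ) (he : e = if N % 2 = 1 then 1 else 0) :
    ((Finset.univ.filter (fun k : Fin N => k + k = 0)).card : ℝ) = 2 - e := by
  rcases Nat.mod_two_eq_zero_or_one N with hp | hp
  · rw [filt_eq_even hN hp, Finset.card_pair (half_ne_zero hN hp), he, if_neg (by omega)]
    norm_num
  · rw [filt_eq_odd hN hp, Finset.card_singleton, he, if_pos hp]
    norm_num

lemma final_sum (hN : 0 < N) (e : ℝ) (he : e = if N % 2 = 1 then 1 else 0) (g : Fin N → ℝ) :
    (N:ℝ) * ∑ d : Fin N, ((N:ℝ)⁻¹*(N:ℝ)⁻¹*((if d + d = 0 then (N:ℝ) else 0) + N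
        - ((Finset.univ.filter (fun k : Fin N => k + k = 0)).card : ℝ))) * g d
    = g ⟨0, hN⟩ + (1-e) * g ⟨N/2, Nat.div_lt_self hN one_lt_two⟩ + ((N-2+e)/N) * ∑ d : Fin N, g d := by
  have hNne : (N:ℝ) ≠ 0 := Nat.cast_ne_zero.mpr hN.ne'
  rw [filt_card hN e he, Finset.mul_sum]
  have hpt : ∀ d : Fin N, (N:ℝ) * (((N:ℝ)⁻¹*(N:ℝ)⁻¹*((if d + d = 0 then (N:ℝ) else 0) + N - (2 - e))) * g d)
      = (if d + d = 0 then (1:ℝ) else 0) * g d + (N:ℝ)⁻¹ * ((N - 2 + e) * g d) := by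
    intro d
    split_ifs <;> field_simp <;> ring
  simp_rw [hpt]
  rw [Finset.sum_add_distrib, sum_two_torsion hN e he g, ← Finset.mul_sum, ← Finset.mul_sum]
  field_simp

include hT in
lemma Breal {b : Fin N → Bool} (hb : b ∈ T) (m j : Fin N) :
    conj ((N:ℂ)⁻¹ * ∑ k, eps b k * om N ^ (((m:ℤ)-(j:ℤ))*(k:ℤ)))
      = (N:ℂ)⁻¹ * ∑ k, eps b k * om N ^ (((m:ℤ)-(j:ℤ))*(k:ℤ)) := by
  rw [map_mul, map_sum]
  congr 1
  · rw [map_inv₀]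
    simp
  · have h1 : ∀ k : Fin N, conj (eps b k * om N ^ (((m:ℤ)-(j:ℤ))*(k:ℤ)))
        = eps b k * om N ^ (-((((m:ℤ)-(j:ℤ))*(k:ℤ)))) := by
      intro k
      rw [map_mul, eps_conj, om_conj_zpow]
    simp_rw [h1]
    rw [← sum_neg_reindex (fun k => eps b k * om N ^ (-((((m:ℤ)-(j:ℤ))*(k:ℤ)))))]
    refine Finset.sum_congr rfl fun k _ => ?_
    rw [eps_neg hT hb k]
    congr 1
    refine om_congr ?_
    have h2 : -(((m:ℤ)-(j:ℤ))*(((-k : Fin N)):ℤ)) = ((m:ℤ)-(j:ℤ))*(-(((-k : Fin N)):ℤ)) := by ring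
    rw [h2]
    exact Int.ModEq.mul_left _ ((fz_neg k).neg.trans (by simp))

lemma csgn_ofReal (x : ℝ) : csgn ((x:ℝ):ℂ) = ((x/|x| : ℝ):ℂ) := by
  rw [csgn, Complex.norm_real, Real.norm_eq_abs]
  push_cast
  rfl

lemma real_csgn_mul (x : ℝ) (hx : x ≠ 0) : conj (csgn ((x:ℝ):ℂ)) * ((x:ℝ):ℂ) = ((|x| : ℝ) : ℂ) := by
  rw [csgn_ofReal, Complex.conj_ofReal, ← Complex.ofReal_mul]
  congr 1
  rw [div_mul_eq_mul_div, ← abs_mul_abs_self x, mul_div_assoc, div_self (abs_ne_zero.mpr hx), mul_one]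

lemma second_term_pt (z : ℂ) (x : ℝ) (hx : x ≠ 0) :
    ((z * conj (csgn ((x:ℝ):ℂ))).re)^2 / ‖((x:ℝ):ℂ)‖ = (z.re)^2 / |x| := by
  rw [csgn_ofReal, Complex.conj_ofReal, Complex.norm_real, Real.norm_eq_abs]
  have h1 : (z * ((x/|x| : ℝ):ℂ)).re = z.re * (x/|x|) := by
    simp [Complex.mul_re]
  rw [h1, mul_pow]
  have h2 : (x/|x|)^2 = 1 := by
    rw [div_pow, sq_abs, div_self (pow_ne_zero 2 hx)]
  rw [h2, mul_one]


/-- For a circulant symmetric orthogonal `U ∈ O(N)` with nonzero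
entries `U_{ij} = γ_{j−i}`, the average of `Φ(U,B)` over the finite set of circulant
symmetric orthogonal matrices `B = F·diag(β)·F*`, `β ∈ {±1}^N` with `β_i = β_{−i}`,
equals `N·∑|γ_i| − (1/|γ₀| + (1−e)/|γ_{N/2}| + ((N−2+e)/N)·∑ 1/|γ_i|)`,
where `e` is the parity of `N`. -/
theorem stmt18 (N : ℕ) (hN : 0 < N) (γ : Fin N → ℝ) (hγ : ∀ i, γ i ≠ 0)
    (U : Matrix (Fin N) (Fin N) ℝ) (hUO : Uᵀ * U = 1) (hUs : U.IsSymm)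
    (hcirc : ∀ i j, U i j = γ (j - i))
    (e : ℝ) (he : e = if N % 2 = 1 then 1 else 0)
    (T : Finset (Fin N → Bool))
    (hT : T = Finset.univ.filter fun b : Fin N → Bool => ∀ i, b i = b (-i))
    (Bmat : (Fin N → Bool) → Matrix (Fin N) (Fin N) ℂ)
    (hB : Bmat = fun b =>
      FourierMat N *
        Matrix.diagonal (fun i => if b i then (1 : ℂ) else -1) * (FourierMat N)ᴴ) :
    (T.card : ℝ)⁻¹ * ∑ b ∈ T, Phi (U.map fun x => (x : ℂ)) (Bmat b) =
      N * (∑ i, |γ i|) -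
        (1 / |γ ⟨0, hN⟩| + (1 - e) / |γ ⟨N / 2, Nat.div_lt_self hN one_lt_two⟩| +
          (N - 2 + e) / N * ∑ i, 1 / |γ i|) := by
  
  haveI : NeZero N := ⟨hN.ne'⟩
  set U' : Matrix (Fin N) (Fin N) ℂ := U.map (fun x => (x:ℂ)) with hU'
  have hU'app : ∀ i j, U' i j = ((γ (j - i) : ℝ) : ℂ) := by
    intro i j
    rw [hU', Matrix.map_apply, hcirc]
  have hsym : ∀ d : Fin N, γ (-d) = γ d := by
    intro d
    have h1 := congrFun (congrFun hUs 0) d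
    rw [Matrix.transpose_apply, hcirc, hcirc, zero_sub, sub_zero] at h1
    exact h1
  have hac : ∀ s : Fin N, ∑ t, γ t * γ (t + s) = if s = 0 then 1 else 0 := by
    intro s
    have h1 := congrFun (congrFun hUO 0) s
    rw [Matrix.mul_apply, Matrix.one_apply] at h1
    have h2 : ∀ m : Fin N, Uᵀ 0 m * U m s = (fun t => γ t * γ (t + s)) (-m) := by
      intro m
      rw [Matrix.transpose_apply, hcirc, hcirc, zero_sub]
      congr 2
      rw [sub_eq_neg_add]
    rw [Finset.sum_congr rfl (fun m _ => h2 m), sum_neg_reindex (fun t => γ t * γ (t + s))] at h1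
    rw [h1]
    exact if_congr eq_comm rfl rfl
  have hBent : ∀ (b : Fin N → Bool) (m j : Fin N), Bmat b m j
      = (N:ℂ)⁻¹ * ∑ k, eps b k * om N ^ (((m:ℤ)-(j:ℤ))*(k:ℤ)) := by
    intro b m j
    rw [hB]
    exact Bent b m j
  have hBsq : ∀ b, Bmat b * Bmat b = 1 := by
    intro b
    rw [hB]
    exact Bsq b
  have hPapp : ∀ (b : Fin N → Bool) (i j : Fin N), (U' * Bmat b) i j
      = ∑ m, ((γ (m - i) : ℝ) : ℂ) * ((N:ℂ)⁻¹ * ∑ k, eps b k * om N ^ (((m:ℤ)-(j:ℤ))*(k:ℤ))) := by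
    intro b i j
    rw [Matrix.mul_apply]
    exact Finset.sum_congr rfl fun m _ => by rw [hU'app, hBent]
  have hPim : ∀ b ∈ T, ∀ i j : Fin N, ((U' * Bmat b) i j).im = 0 := by
    intro b hb i j
    rw [hPapp]
    rw [Complex.im_sum]
    refine Finset.sum_eq_zero fun m _ => ?_
    have hBim : ((N:ℂ)⁻¹ * ∑ k, eps b k * om N ^ (((m:ℤ)-(j:ℤ))*(k:ℤ))).im = 0 :=
      Complex.conj_eq_iff_im.mp (Breal hT hb m j)
    rw [Complex.mul_im, Complex.ofReal_re, Complex.ofReal_im, hBim]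
    ring
  have hPhi : ∀ b ∈ T, Phi U' (Bmat b) = (N:ℝ) * (∑ d, |γ d|)
      - ∑ i, ∑ j, (((U' * Bmat b) i j).re)^2 / |γ (j - i)| := by
    intro b hb
    unfold Phi
    rw [hBsq b, mul_one]
    congr 1
    · -- trace part
      have h1 : ∀ i : Fin N, (((Matrix.of fun i j => csgn (U' i j))ᴴ * U') i i)
          = ∑ j, ((|γ (i - j)| : ℝ):ℂ) := by
        intro i
        rw [Matrix.mul_apply]
        refine Finset.sum_congr rfl fun j _ => ?_
        rw [Matrix.conjTranspose_apply, Matrix.of_apply, Complex.star_def, hU'app j i]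
        exact real_csgn_mul (γ (i - j)) (hγ _)
      have h2 : Matrix.trace ((Matrix.of fun i j => csgn (U' i j))ᴴ * U')
          = ∑ i : Fin N, ∑ j : Fin N, ((|γ (i - j)| : ℝ):ℂ) := by
        rw [Matrix.trace]
        exact Finset.sum_congr rfl fun i _ => h1 i
      rw [h2, Complex.re_sum]
      have h3 : ∀ i : Fin N, (∑ j : Fin N, ((|γ (i - j)| : ℝ):ℂ)).re = ∑ d : Fin N, |γ d| := by
        intro i
        rw [Complex.re_sum]
        simp_rw [Complex.ofReal_re]
        exact sum_shift' (fun d => |γ d|) i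
      rw [Finset.sum_congr rfl (fun i _ => h3 i), Finset.sum_const, Finset.card_univ,
        Fintype.card_fin, nsmul_eq_mul]
    · refine Finset.sum_congr rfl fun i _ => Finset.sum_congr rfl fun j _ => ?_
      rw [hU'app i j]
      exact second_term_pt _ _ (hγ _)
  set fc : ℝ := ((Finset.univ.filter (fun k : Fin N => k + k = 0)).card : ℝ) with hfc
  have hPsq : ∀ i j : Fin N, ∑ b ∈ T, (((U' * Bmat b) i j).re)^2
      = (T.card:ℝ) * ((N:ℝ)⁻¹*(N:ℝ)⁻¹*((if (j-i)+(j-i)=0 then (N:ℝ) else 0) + N - fc)) := by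
    intro i j
    have h1 : ∀ b ∈ T, (((U' * Bmat b) i j).re)^2 = ((U' * Bmat b) i j * (U' * Bmat b) i j).re := by
      intro b hb
      rw [Complex.mul_re, hPim b hb i j]
      ring
    rw [Finset.sum_congr rfl h1, ← Complex.re_sum]
    have h2 : (∑ b ∈ T, (U' * Bmat b) i j * (U' * Bmat b) i j)
        = ∑ b ∈ T, (∑ m, ((γ (m - i) : ℝ) : ℂ) * ((N:ℂ)⁻¹ * ∑ k, eps b k * om N ^ (((m:ℤ)-(j:ℤ))*(k:ℤ))))
           * (∑ m, ((γ (m - i) : ℝ) : ℂ) * ((N:ℂ)⁻¹ * ∑ k, eps b k * om N ^ (((m:ℤ)-(j:ℤ))*(k:ℤ)))) :=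
      Finset.sum_congr rfl fun b _ => by rw [hPapp]
    rw [h2, Psum hT hac hsym i j]
    have h3 : (T.card:ℂ) * ((N:ℂ)⁻¹*(N:ℂ)⁻¹) *
        ((if (j-i)+(j-i)=0 then (N:ℂ) else 0) + (N:ℂ) - ((Finset.univ.filter (fun k : Fin N => k + k = 0)).card : ℂ))
        = (((T.card:ℝ) * ((N:ℝ)⁻¹*(N:ℝ)⁻¹*((if (j-i)+(j-i)=0 then (N:ℝ) else 0) + N - fc)) : ℝ) : ℂ) := by
      rw [hfc]
      split_ifs <;> push_cast <;> ring
    rw [h3, Complex.ofReal_re]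
  rw [Finset.sum_congr rfl hPhi, Finset.sum_sub_distrib, Finset.sum_const]
  have hswapA : (∑ b ∈ T, ∑ i : Fin N, ∑ j : Fin N, (((U' * Bmat b) i j).re)^2 / |γ (j - i)|)
      = ∑ i : Fin N, ∑ j : Fin N, (T.card:ℝ) *
          (((N:ℝ)⁻¹*(N:ℝ)⁻¹*((if (j-i)+(j-i)=0 then (N:ℝ) else 0) + N - fc)) * (1 / |γ (j - i)|)) := by
    rw [Finset.sum_comm]
    refine Finset.sum_congr rfl fun i _ => ?_
    rw [Finset.sum_comm]
    refine Finset.sum_congr rfl fun j _ => ?_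
    rw [← Finset.sum_div, hPsq i j]
    rw [div_eq_mul_one_div, mul_assoc]
  rw [hswapA]
  have hshift2 : ∀ i : Fin N, (∑ j : Fin N, (T.card:ℝ) *
          (((N:ℝ)⁻¹*(N:ℝ)⁻¹*((if (j-i)+(j-i)=0 then (N:ℝ) else 0) + N - fc)) * (1 / |γ (j - i)|)))
      = ∑ d : Fin N, (T.card:ℝ) *
          (((N:ℝ)⁻¹*(N:ℝ)⁻¹*((if d+d=0 then (N:ℝ) else 0) + N - fc)) * (1 / |γ d|)) :=
    fun i => sum_shift (fun d => (T.card:ℝ) *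
          (((N:ℝ)⁻¹*(N:ℝ)⁻¹*((if d+d=0 then (N:ℝ) else 0) + N - fc)) * (1 / |γ d|))) i
  rw [Finset.sum_congr rfl (fun i _ => hshift2 i), Finset.sum_const, Finset.card_univ,
    Fintype.card_fin, ← Finset.mul_sum]
  set A : ℝ := (N:ℝ) * (∑ d, |γ d|) with hA
  set S : ℝ := ∑ d : Fin N, (((N:ℝ)⁻¹*(N:ℝ)⁻¹*((if d+d=0 then (N:ℝ) else 0) + N - fc)) * (1 / |γ d|)) with hS
  have hkey : (N:ℝ) * S
      = 1 / |γ ⟨0, hN⟩| + (1 - e) / |γ ⟨N / 2, Nat.div_lt_self hN one_lt_two⟩|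
        + (N - 2 + e) / N * ∑ i, 1 / |γ i| := by
    rw [hS, hfc]
    rw [final_sum (N := N) hN e he (fun d => 1 / |γ d|)]
    rw [mul_one_div]
  have hc : (T.card : ℝ) ≠ 0 := Nat.cast_ne_zero.mpr (T_card_pos hT).ne'
  have hfin : (T.card : ℝ)⁻¹ * ((T.card) • A - N • ((T.card:ℝ) * S)) = A - (N:ℝ) * S := by
    rw [nsmul_eq_mul, nsmul_eq_mul]
    field_simp
  rw [hfin, hkey]
end

section
/- Let H ∈ M_N(ℂ) be a complex Hadamard matrix and U = H/√N the associated unitary. Define E_U = { B ∈ M_N(ℂ) : B = B* and Φ(U,B) = 0 } and D_U = { A ∈ M_N(ℝ) : Σ_k conj(U_{ki})·U_{kj}·(A_{ki} − A_{kj}) = 0 for all i,j }. Then the ℝ-linear map B ↦ A, where A_{ij} = (UB)_{ij}·conj(U_{ij}), is a bijection from E_U onto D_U; in particular dim_ℝ E_U = dim_ℝ D_U. -/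
open scoped Matrix ComplexConjugate

lemma aux_HtH {N : ℕ} (hN : 0 < N) (H : Matrix (Fin N) (Fin N) ℂ)
    (hH2 : H * Hᴴ = (N : ℂ) • 1) : Hᴴ * H = (N : ℂ) • 1 := by
  have hNne : (N : ℂ) ≠ 0 := Nat.cast_ne_zero.2 hN.ne'
  have h1 : H * ((N : ℂ)⁻¹ • Hᴴ) = 1 := by
    rw [Matrix.mul_smul, hH2, smul_smul, inv_mul_cancel₀ hNne, one_smul]
  have h2 := (mul_eq_one_comm).1 h1
  calc Hᴴ * H = (N:ℂ) • (((N:ℂ)⁻¹ • Hᴴ) * H) := by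
        rw [Matrix.smul_mul, smul_smul, mul_inv_cancel₀ hNne, one_smul]
    _ = (N:ℂ) • 1 := by rw [h2]

lemma aux_sqrt_pos {N : ℕ} (hN : 0 < N) : 0 < Real.sqrt N :=
  Real.sqrt_pos.2 (by exact_mod_cast hN)

lemma aux_sqrt_sq (N : ℕ) : (Real.sqrt N) * (Real.sqrt N) = (N : ℝ) :=
  Real.mul_self_sqrt (by positivity)

lemma aux_sqrt_sqC (N : ℕ) : ((Real.sqrt N : ℝ) : ℂ) * ((Real.sqrt N : ℝ) : ℂ) = (N : ℂ) := by
  rw [← Complex.ofReal_mul, aux_sqrt_sq]; push_cast; ring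

lemma aux_absU {N : ℕ} (hN : 0 < N) (H U : Matrix (Fin N) (Fin N) ℂ)
    (hH1 : ∀ i j, ‖H i j‖ = 1)
    (hU : U = ((Real.sqrt N : ℂ))⁻¹ • H) :
    ∀ i j, ‖U i j‖ = (Real.sqrt N)⁻¹ := by
  intro i j
  have hs : 0 < Real.sqrt N := aux_sqrt_pos hN
  rw [hU]
  simp [Matrix.smul_apply, smul_eq_mul, norm_mul, norm_inv, Complex.norm_real, Real.norm_eq_abs,
    abs_of_pos hs, hH1]

lemma aux_csgn {N : ℕ} (hN : 0 < N) (H U : Matrix (Fin N) (Fin N) ℂ)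
    (hH1 : ∀ i j, ‖H i j‖ = 1)
    (hU : U = ((Real.sqrt N : ℂ))⁻¹ • H) :
    ∀ i j, csgn (U i j) = H i j := by
  intro i j
  have hs : 0 < Real.sqrt N := aux_sqrt_pos hN
  have habs := aux_absU hN H U hH1 hU i j
  have hc : ((Real.sqrt N : ℝ) : ℂ) ≠ 0 := by exact_mod_cast hs.ne'
  rw [csgn, habs, hU]
  simp only [Matrix.smul_apply, smul_eq_mul]
  rw [Complex.ofReal_inv]
  field_simp

lemma aux_UhU {N : ℕ} (hN : 0 < N) (H U : Matrix (Fin N) (Fin N) ℂ)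
    (hH2 : H * Hᴴ = (N : ℂ) • 1)
    (hU : U = ((Real.sqrt N : ℂ))⁻¹ • H) :
    Uᴴ * U = 1 := by
  have hs : 0 < Real.sqrt N := aux_sqrt_pos hN
  have hc : ((Real.sqrt N : ℝ) : ℂ) ≠ 0 := by exact_mod_cast hs.ne'
  rw [hU, Matrix.conjTranspose_smul, Matrix.smul_mul, Matrix.mul_smul,
    aux_HtH hN H hH2, smul_smul, smul_smul]
  rw [show (star (((Real.sqrt N:ℝ):ℂ))⁻¹ * (((Real.sqrt N:ℝ):ℂ))⁻¹ * (N:ℂ)) = 1 by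
    rw [star_inv₀, Complex.star_def, Complex.conj_ofReal]
    field_simp
    rw [← aux_sqrt_sqC N]; ring]
  rw [one_smul]

lemma aux_H_eq {N : ℕ} (hN : 0 < N) (H U : Matrix (Fin N) (Fin N) ℂ)
    (hU : U = ((Real.sqrt N : ℂ))⁻¹ • H) :
    ∀ i j, H i j = ((Real.sqrt N : ℝ) : ℂ) * U i j := by
  intro i j
  have hs : 0 < Real.sqrt N := aux_sqrt_pos hN
  have hc : ((Real.sqrt N : ℝ) : ℂ) ≠ 0 := by exact_mod_cast hs.ne'
  rw [hU]
  simp only [Matrix.smul_apply, smul_eq_mul]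
  field_simp

lemma phi_formula {N : ℕ} (hN : 0 < N) (H U : Matrix (Fin N) (Fin N) ℂ)
    (hH1 : ∀ i j, ‖H i j‖ = 1)
    (hH2 : H * Hᴴ = (N : ℂ) • 1)
    (hU : U = ((Real.sqrt N : ℂ))⁻¹ • H)
    (B : Matrix (Fin N) (Fin N) ℂ) (hB : B.IsHermitian) :
    Phi U B = ((N : ℝ) * Real.sqrt N) *
      ∑ i, ∑ j, (((U * B) i j * conj (U i j)).im) ^ 2 := by
  have hs : 0 < Real.sqrt N := aux_sqrt_pos hN
  have hs2 : Real.sqrt N * Real.sqrt N = (N : ℝ) := aux_sqrt_sq N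
  have hNpos : (0:ℝ) < N := by exact_mod_cast hN
  have hS : (Matrix.of fun i j => csgn (U i j)) = H := by
    ext i j; exact aux_csgn hN H U hH1 hU i j
  have hHU : Hᴴ * U = ((Real.sqrt N : ℝ) : ℂ) • (1 : Matrix (Fin N) (Fin N) ℂ) := by
    rw [hU, Matrix.mul_smul, aux_HtH hN H hH2, smul_smul]
    congr 1
    have hc : ((Real.sqrt N : ℝ) : ℂ) ≠ 0 := by exact_mod_cast hs.ne'
    field_simp
    rw [← aux_sqrt_sqC N]; ring
  have htr : (Matrix.trace ((Matrix.of fun i j => csgn (U i j))ᴴ * U * (B * B))).re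
      = Real.sqrt N * (Matrix.trace ((U*B)ᴴ * (U*B))).re := by
    rw [hS]
    have h2 : Hᴴ * U * (B*B) = ((Real.sqrt N : ℝ) : ℂ) • (B * B) := by
      rw [hHU, Matrix.smul_mul, Matrix.one_mul]
    have h3 : (U*B)ᴴ * (U*B) = B * B := by
      rw [Matrix.conjTranspose_mul, Matrix.mul_assoc, ← Matrix.mul_assoc Uᴴ,
        aux_UhU hN H U hH2 hU, Matrix.one_mul, Matrix.IsHermitian.eq hB]
    rw [h2, h3, Matrix.trace_smul, smul_eq_mul]
    simp [Complex.mul_re]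
  have htr2 : (Matrix.trace ((U*B)ᴴ * (U*B))).re = ∑ i, ∑ j, Complex.normSq ((U*B) i j) := by
    have : Matrix.trace ((U*B)ᴴ * (U*B))
        = ((∑ i, ∑ j, Complex.normSq ((U*B) i j) : ℝ) : ℂ) := by
      simp only [Matrix.trace, Matrix.diag_apply, Matrix.mul_apply,
        Matrix.conjTranspose_apply]
      push_cast
      rw [Finset.sum_comm]
      refine Finset.sum_congr rfl fun i _ => Finset.sum_congr rfl fun j _ => ?_
      rw [Complex.star_def, mul_comm, Complex.mul_conj]
    rw [this, Complex.ofReal_re]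
  have habs2 : ((Real.sqrt N)⁻¹)^2 = (N:ℝ)⁻¹ := by
    rw [inv_pow, Real.sq_sqrt (by positivity)]
  have hentry : ∀ i j, Complex.normSq ((U*B) i j) =
      (N : ℝ) * ((((U*B) i j * conj (U i j)).re)^2 + (((U*B) i j * conj (U i j)).im)^2) := by
    intro i j
    have key : Complex.normSq ((U*B) i j * conj (U i j))
        = Complex.normSq ((U*B) i j) * (N:ℝ)⁻¹ := by
      rw [map_mul, Complex.normSq_conj, ← Complex.sq_norm (U i j),
        aux_absU hN H U hH1 hU, habs2]
    have h4 : Complex.normSq ((U*B) i j * conj (U i j))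
        = (((U*B) i j * conj (U i j)).re)^2 + (((U*B) i j * conj (U i j)).im)^2 := by
      rw [Complex.normSq_apply]; ring
    rw [← h4, key]
    field_simp
  have hterm : ∀ i j, (((U*B) i j * conj (csgn (U i j))).re)^2 / ‖U i j‖
      = ((N:ℝ) * Real.sqrt N) * (((U*B) i j * conj (U i j)).re)^2 := by
    intro i j
    rw [aux_csgn hN H U hH1 hU, aux_H_eq hN H U hU, map_mul, Complex.conj_ofReal,
        aux_absU hN H U hH1 hU]
    have h5 : ((U*B) i j * (((Real.sqrt N:ℝ):ℂ) * conj (U i j))).re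
        = Real.sqrt N * ((U*B) i j * conj (U i j)).re := by
      rw [show (U*B) i j * (((Real.sqrt N:ℝ):ℂ) * conj (U i j))
          = ((Real.sqrt N:ℝ):ℂ) * ((U*B) i j * conj (U i j)) by ring]
      simp [Complex.mul_re]
    rw [h5, div_eq_mul_inv, inv_inv]
    linear_combination (Real.sqrt N * (((U*B) i j * conj (U i j)).re)^2) * hs2
  rw [Phi, htr, htr2]
  have e1 : ∑ i, ∑ j, (((U*B) i j * conj (csgn (U i j))).re)^2 / ‖U i j‖
      = ((N:ℝ) * Real.sqrt N) * ∑ i, ∑ j, (((U*B) i j * conj (U i j)).re)^2 := by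
    rw [Finset.mul_sum]
    refine Finset.sum_congr rfl fun i _ => ?_
    rw [Finset.mul_sum]
    exact Finset.sum_congr rfl fun j _ => hterm i j
  rw [e1]
  have e2 : ∑ i, ∑ j, Complex.normSq ((U*B) i j)
      = (N:ℝ) * ∑ i, ∑ j, ((((U*B) i j * conj (U i j)).re)^2
          + (((U*B) i j * conj (U i j)).im)^2) := by
    rw [Finset.mul_sum]
    refine Finset.sum_congr rfl fun i _ => ?_
    rw [Finset.mul_sum]
    exact Finset.sum_congr rfl fun j _ => hentry i j
  rw [e2]
  have e3 : ∑ i, ∑ j, ((((U*B) i j * conj (U i j)).re)^2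
          + (((U*B) i j * conj (U i j)).im)^2)
      = (∑ i, ∑ j, (((U*B) i j * conj (U i j)).re)^2)
        + (∑ i, ∑ j, (((U*B) i j * conj (U i j)).im)^2) := by
    rw [← Finset.sum_add_distrib]
    exact Finset.sum_congr rfl fun i _ => Finset.sum_add_distrib
  rw [e3]
  ring

/-- For a complex Hadamard matrix `H` and `U = H/√N`, the map
`B ↦ A`, `A_{ij} = (UB)_{ij}·conj(U_{ij})`, takes real values on
`E_U = {B hermitian : Φ(U,B) = 0}` and is a bijection from `E_U` onto
`D_U = {A ∈ M_N(ℝ) : ∑_k conj(U_{ki})·U_{kj}·(A_{ki} − A_{kj}) = 0 ∀ i,j}`;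
in particular `dim_ℝ E_U = dim_ℝ D_U`. -/
theorem stmt19 (N : ℕ) (H : Matrix (Fin N) (Fin N) ℂ)
    (hH1 : ∀ i j, ‖H i j‖ = 1)
    (hH2 : H * Hᴴ = (N : ℂ) • (1 : Matrix (Fin N) (Fin N) ℂ))
    (U : Matrix (Fin N) (Fin N) ℂ) (hU : U = ((Real.sqrt N : ℂ))⁻¹ • H)
    (EU : Set (Matrix (Fin N) (Fin N) ℂ))
    (hEU : EU = {B | B.IsHermitian ∧ Phi U B = 0})
    (DU : Set (Matrix (Fin N) (Fin N) ℝ))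
    (hDU : DU = {A | ∀ i j, ∑ k, conj (U k i) * U k j * ((A k i : ℂ) - (A k j : ℂ)) = 0}) :
    (∀ B ∈ EU, ∀ i j, ((U * B) i j * conj (U i j)).im = 0) ∧
    Set.BijOn (fun B => Matrix.of fun i j => ((U * B) i j * conj (U i j)).re) EU DU := by
  subst hEU hDU hU
  set U : Matrix (Fin N) (Fin N) ℂ := ((Real.sqrt N : ℂ))⁻¹ • H with hU
  rcases Nat.eq_zero_or_pos N with h0 | hN
  · subst h0
    constructor
    · intro B _ i j; exact i.elim0
    · refine ⟨?_, ?_, ?_⟩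
      · intro B _; simp only [Set.mem_setOf_eq]; intro i j; exact i.elim0
      · intro B1 _ B2 _ _; ext i j; exact i.elim0
      · intro A _
        refine ⟨0, ⟨Matrix.isHermitian_zero, ?_⟩, ?_⟩
        · simp [Phi, Matrix.trace_fin_zero]
        · ext i j; exact i.elim0
  -- main case
  have hs : 0 < Real.sqrt N := aux_sqrt_pos hN
  have hsne : Real.sqrt N ≠ 0 := hs.ne'
  have hNC : (N : ℂ) ≠ 0 := Nat.cast_ne_zero.2 hN.ne'
  have hUhU : Uᴴ * U = 1 := aux_UhU hN H U hH2 rfl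
  have hUUh : U * Uᴴ = 1 := mul_eq_one_comm.1 hUhU
  have hUn : ∀ k l, U k l * conj (U k l) = ((N:ℂ))⁻¹ := by
    intro k l
    rw [Complex.mul_conj, ← Complex.sq_norm, aux_absU hN H U hH1 rfl, inv_pow,
      Real.sq_sqrt (by positivity)]
    push_cast
    ring
  have hUne : ∀ k l, conj (U k l) ≠ 0 := by
    intro k l h
    have := hUn k l
    rw [h, mul_zero] at this
    exact (inv_ne_zero hNC) this.symm
  -- part 1
  have part1 : ∀ B ∈ {B : Matrix (Fin N) (Fin N) ℂ | B.IsHermitian ∧ Phi U B = 0},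
      ∀ i j, ((U * B) i j * conj (U i j)).im = 0 := by
    intro B hB i j
    obtain ⟨hherm, hphi⟩ := hB
    rw [phi_formula hN H U hH1 hH2 rfl B hherm] at hphi
    have hpos : (0:ℝ) < (N : ℝ) * Real.sqrt N := by positivity
    have hsum : ∑ i, ∑ j, (((U * B) i j * conj (U i j)).im) ^ 2 = 0 := by
      rcases mul_eq_zero.1 hphi with h | h
      · exact absurd h hpos.ne'
      · exact h
    have h1 : ∀ i ∈ Finset.univ, (0:ℝ) ≤ ∑ j, (((U * B) i j * conj (U i j)).im) ^ 2 :=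
      fun i _ => Finset.sum_nonneg fun j _ => sq_nonneg _
    have h2 := (Finset.sum_eq_zero_iff_of_nonneg h1).1 hsum i (Finset.mem_univ i)
    have h3 := (Finset.sum_eq_zero_iff_of_nonneg
      (fun j _ => sq_nonneg _)).1 h2 j (Finset.mem_univ j)
    exact (pow_eq_zero_iff two_ne_zero).1 h3
  refine ⟨part1, ?_, ?_, ?_⟩
  · -- MapsTo
    intro B hB
    obtain ⟨hherm, hphi⟩ := hB
    simp only [Set.mem_setOf_eq]
    intro i j
    have hw : ∀ k l, (((U * B) k l * conj (U k l)).re : ℂ) = (U * B) k l * conj (U k l) := by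
      intro k l
      have him := part1 B ⟨hherm, hphi⟩ k l
      exact Complex.ext (by simp) (by simp [him])
    have hreal : ∀ k l, (U * B) k l * conj (U k l) = conj ((U * B) k l) * U k l := by
      intro k l
      have him := part1 B ⟨hherm, hphi⟩ k l
      have hc : conj ((U * B) k l * conj (U k l)) = (U * B) k l * conj (U k l) :=
        Complex.conj_eq_iff_im.2 him
      calc (U * B) k l * conj (U k l) = conj ((U * B) k l * conj (U k l)) := hc.symm
        _ = conj ((U * B) k l) * U k l := by rw [map_mul, Complex.conj_conj]
    have hUhUB : Uᴴ * (U * B) = B := by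
      rw [← Matrix.mul_assoc, hUhU, Matrix.one_mul]
    have hUBhU : (U * B)ᴴ * U = B := by
      rw [Matrix.conjTranspose_mul, Matrix.mul_assoc, hUhU, Matrix.mul_one,
        Matrix.IsHermitian.eq hherm]
    have hB1 : B i j = ∑ k, conj (U k i) * (U * B) k j := by
      conv_lhs => rw [← hUhUB]
      rw [Matrix.mul_apply]
      refine Finset.sum_congr rfl fun k _ => ?_
      rw [Matrix.conjTranspose_apply, Complex.star_def]
    have hB2 : B i j = ∑ k, conj ((U * B) k i) * U k j := by
      conv_lhs => rw [← hUBhU]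
      rw [Matrix.mul_apply]
      refine Finset.sum_congr rfl fun k _ => ?_
      rw [Matrix.conjTranspose_apply, Complex.star_def]
    have step : ∀ k, conj (U k i) * U k j *
        ((((Matrix.of fun i j => ((U * B) i j * conj (U i j)).re) k i : ℝ) : ℂ)
          - (((Matrix.of fun i j => ((U * B) i j * conj (U i j)).re) k j : ℝ) : ℂ))
        = (N:ℂ)⁻¹ * (conj ((U * B) k i) * U k j) - (N:ℂ)⁻¹ * (conj (U k i) * (U * B) k j) := by
      intro k
      simp only [Matrix.of_apply]
      rw [hw k i, hw k j, hreal k i]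
      rw [show conj (U k i) * U k j * (conj ((U * B) k i) * U k i - (U * B) k j * conj (U k j))
        = (U k i * conj (U k i)) * (conj ((U * B) k i) * U k j)
          - (U k j * conj (U k j)) * (conj (U k i) * (U * B) k j) by ring]
      rw [hUn k i, hUn k j]
    rw [Finset.sum_congr rfl fun k _ => step k, Finset.sum_sub_distrib,
      ← Finset.mul_sum, ← Finset.mul_sum, ← hB1, ← hB2, sub_self]
  · -- InjOn
    intro B1 hB1 B2 hB2 hf
    have him1 := part1 B1 hB1
    have him2 := part1 B2 hB2
    have hUB : U * B1 = U * B2 := by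
      ext i j
      have hre : ((U * B1) i j * conj (U i j)).re = ((U * B2) i j * conj (U i j)).re := by
        have := congrFun (congrFun hf i) j
        simpa using this
      have : (U * B1) i j * conj (U i j) = (U * B2) i j * conj (U i j) :=
        Complex.ext hre (by rw [him1 i j, him2 i j])
      exact mul_right_cancel₀ (hUne i j) this
    calc B1 = Uᴴ * (U * B1) := by rw [← Matrix.mul_assoc, hUhU, Matrix.one_mul]
      _ = Uᴴ * (U * B2) := by rw [hUB]
      _ = B2 := by rw [← Matrix.mul_assoc, hUhU, Matrix.one_mul]
  · -- SurjOn
    intro A hA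
    simp only [Set.mem_setOf_eq] at hA
    set P : Matrix (Fin N) (Fin N) ℂ := Matrix.of fun i j => ((A i j : ℝ) : ℂ) * U i j with hP
    set B : Matrix (Fin N) (Fin N) ℂ := (N : ℂ) • (Uᴴ * P) with hBdef
    have hUB : U * B = (N : ℂ) • P := by
      rw [hBdef, Matrix.mul_smul, ← Matrix.mul_assoc, hUUh, Matrix.one_mul]
    have hw : ∀ i j, (U * B) i j * conj (U i j) = ((A i j : ℝ) : ℂ) := by
      intro i j
      rw [hUB]
      simp only [Matrix.smul_apply, Matrix.of_apply, smul_eq_mul, hP]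
      rw [show (N:ℂ) * (((A i j : ℝ) : ℂ) * U i j) * conj (U i j)
        = ((A i j : ℝ) : ℂ) * ((N:ℂ) * (U i j * conj (U i j))) by ring, hUn i j,
        mul_inv_cancel₀ hNC, mul_one]
    have hherm : B.IsHermitian := by
      have hPh : Pᴴ * U = Uᴴ * P := by
        ext i j
        simp only [Matrix.mul_apply, Matrix.conjTranspose_apply, Matrix.of_apply,
          Complex.star_def, hP]
        rw [← sub_eq_zero, ← Finset.sum_sub_distrib]
        rw [Finset.sum_congr rfl fun k _ => (by
          rw [map_mul, Complex.conj_ofReal]; ring :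
          conj (((A k i : ℝ) : ℂ) * U k i) * U k j - conj (U k i) * (((A k j : ℝ) : ℂ) * U k j)
            = conj (U k i) * U k j * (((A k i : ℝ) : ℂ) - ((A k j : ℝ) : ℂ)))]
        exact hA i j
      rw [Matrix.IsHermitian, hBdef, Matrix.conjTranspose_smul, Matrix.conjTranspose_mul,
        Matrix.conjTranspose_conjTranspose]
      rw [hPh]
      congr 1
      simp [Complex.star_def]
    refine ⟨B, ⟨hherm, ?_⟩, ?_⟩
    · rw [phi_formula hN H U hH1 hH2 rfl B hherm]
      have : ∀ i j, (((U * B) i j * conj (U i j)).im) ^ 2 = 0 := by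
        intro i j; rw [hw i j]; simp
      have hzero : ∑ i, ∑ j, (((U * B) i j * conj (U i j)).im) ^ 2 = 0 :=
        Finset.sum_eq_zero fun i _ => Finset.sum_eq_zero fun j _ => this i j
      rw [hzero, mul_zero]
    · ext i j
      simp only [Matrix.of_apply]
      rw [hw i j, Complex.ofReal_re]
end
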